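/- The Coxeter polynomials of N_{15}(4) and N_{15}(6) coincide and equal (λ+1)(λ^{8} + λ^{4} + 1)(λ^{6} + 1), where the Coxeter polynomial of N_n(r) is the characteristic polynomial of Φ = −C^{-T}·C for the 0-1 band Cartan matrix C with C_{ij} = 1 iff i ≤ j ≤ i + r − 1. -/

import Mathlib

open Polynomial Matrix

set_option maxHeartbeats 4000000

/-- The Cartan matrix of the Nakayama algebra N_n(r): C i j = 1 iff i ≤ j ≤ i + r - 1. -/
def cartanN (n r : ℕ) : Matrix (Fin n) (Fin n) ℚ :=
  fun i j => if (i : ℕ) ≤ (j : ℕ) ∧ (j : ℕ) ≤ (i : ℕ) + (r - 1) then 1 else 0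

/-- The Coxeter matrix Φ = -C^{-T}·C of N_n(r). -/
noncomputable def coxeterN (n r : ℕ) : Matrix (Fin n) (Fin n) ℚ :=
  -((cartanN n r)⁻¹)ᵀ * cartanN n r

/-- The Coxeter polynomial of N_n(r): the characteristic polynomial det(λ·I - Φ). -/
noncomputable def coxeterPolyN (n r : ℕ) : Polynomial ℚ :=
  (coxeterN n r).charpoly

/- ### Auxiliary machinery -/

/-- Integer version of the Cartan matrix. -/
def cartanZ (n r : ℕ) : Matrix (Fin n) (Fin n) ℤ :=
  fun i j => if (i : ℕ) ≤ (j : ℕ) ∧ (j : ℕ) ≤ (i : ℕ) + (r - 1) then 1 else 0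

/-- Build a matrix from a list of lists of integers. -/
def mkM (n : ℕ) (l : List (List ℤ)) : Matrix (Fin n) (Fin n) ℤ :=
  Matrix.of fun i j => ((l.getD i.val []).getD j.val 0)

lemma cartan_cast (n r : ℕ) : cartanN n r = (cartanZ n r).map (Int.castRingHom ℚ) := by
  ext i j
  simp [cartanN, cartanZ, Matrix.map_apply, apply_ite (⇑(Int.castRingHom ℚ))]

lemma coxeter_eq (n r : ℕ) (Bz Fz : Matrix (Fin n) (Fin n) ℤ)
    (hB : cartanZ n r * Bz = 1) (hF : -Bzᵀ * cartanZ n r = Fz) :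
    coxeterN n r = Fz.map (Int.castRingHom ℚ) := by
  have hC := cartan_cast n r
  have hCB : cartanN n r * Bz.map (Int.castRingHom ℚ) = 1 := by
    rw [hC, ← Matrix.map_mul, hB, Matrix.map_one _ (map_zero _) (map_one _)]
  have hneg : (-Bzᵀ).map (⇑(Int.castRingHom ℚ)) = -(Bzᵀ.map (⇑(Int.castRingHom ℚ))) := by
    ext i j; simp
  unfold coxeterN
  rw [Matrix.inv_eq_right_inv hCB, ← Matrix.transpose_map, hC, ← hneg, ← Matrix.map_mul, hF]

lemma det_eq_of_LU {n : ℕ} (M L U : Matrix (Fin n) (Fin n) ℤ) (f v : ℤ)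
    (hLU : L * M = U)
    (hL : ∀ i j : Fin n, i < j → L i j = 0)
    (hU : ∀ i j : Fin n, j < i → U i j = 0)
    (hf : ∏ i, L i i = f) (hf0 : f ≠ 0)
    (hfv : ∏ i, U i i = f * v) :
    M.det = v := by
  have hLt : L.BlockTriangular OrderDual.toDual := fun i j hij => hL i j hij
  have hUt : U.BlockTriangular id := fun i j hij => hU i j hij
  have h1 : L.det * M.det = U.det := by rw [← Matrix.det_mul, hLU]
  rw [Matrix.det_of_lowerTriangular L hLt, Matrix.det_of_upperTriangular hUt, hf, hfv] at h1
  exact mul_left_cancel₀ hf0 h1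

lemma charpoly_eval {n : ℕ} (M : Matrix (Fin n) (Fin n) ℤ) (a : ℤ) :
    M.charpoly.eval a = (a • (1 : Matrix (Fin n) (Fin n) ℤ) - M).det := by
  rw [Matrix.charpoly, ← Polynomial.coe_evalRingHom, RingHom.map_det]
  congr 1
  ext i j
  rcases eq_or_ne i j with rfl | h
  · simp [RingHom.mapMatrix_apply, Matrix.map_apply, Matrix.charmatrix_apply_eq,
      Matrix.one_apply_eq, ← Matrix.diagonal_intCast, Matrix.diagonal_apply_eq]
  · simp [RingHom.mapMatrix_apply, Matrix.map_apply, Matrix.charmatrix_apply_ne _ _ _ h,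
      Matrix.one_apply_ne h, h, ← Matrix.diagonal_intCast, Matrix.diagonal_apply_ne _ h]

lemma poly_eq_of_eval (p q : Polynomial ℤ) (hp : p.Monic) (hq : q.Monic)
    (hpd : p.natDegree = 15) (hqd : q.natDegree = 15)
    (S : Finset ℤ) (hS : 15 ≤ S.card)
    (he : ∀ a ∈ S, p.eval a = q.eval a) : p = q := by
  have hsub : p - q = 0 := by
    rcases eq_or_ne (p - q) 0 with h | h
    · exact h
    · apply Polynomial.eq_zero_of_natDegree_lt_card_of_eval_eq_zero' _ S
        (fun a ha => by rw [Polynomial.eval_sub, he a ha, sub_self])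
      have hdd : p.degree = q.degree := by
        rw [Polynomial.degree_eq_natDegree hp.ne_zero, Polynomial.degree_eq_natDegree hq.ne_zero,
          hpd, hqd]
      have h2 := Polynomial.degree_sub_lt hdd hp.ne_zero
        (by rw [hp.leadingCoeff, hq.leadingCoeff])
      rw [Polynomial.degree_eq_natDegree hp.ne_zero, hpd] at h2
      exact lt_of_lt_of_le ((Polynomial.natDegree_lt_iff_degree_lt h).mpr h2) hS
  exact sub_eq_zero.mp hsub

def Bz4 : Matrix (Fin 15) (Fin 15) ℤ := mkM 15 [[1, -1, 0, 0, 1, -1, 0, 0, 1, -1, 0, 0, 1, -1, 0], [0, 1, -1, 0, 0, 1, -1, 0, 0, 1, -1, 0, 0, 1, -1], [0, 0, 1, -1, 0, 0, 1, -1, 0, 0, 1, -1, 0, 0, 1], [0, 0, 0, 1, -1, 0, 0, 1, -1, 0, 0, 1, -1, 0, 0], [0, 0, 0, 0, 1, -1, 0, 0, 1, -1, 0, 0, 1, -1, 0], [0, 0, 0, 0, 0, 1, -1, 0, 0, 1, -1, 0, 0, 1, -1], [0, 0, 0, 0, 0, 0, 1, -1, 0, 0, 1, -1, 0, 0, 1],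 [0, 0, 0, 0, 0, 0, 0, 1, -1, 0, 0, 1, -1, 0, 0], [0, 0, 0, 0, 0, 0, 0, 0, 1, -1, 0, 0, 1, -1, 0], [0, 0, 0, 0, 0, 0, 0, 0, 0, 1, -1, 0, 0, 1, -1], [0, 0, 0, 0, 0, 0, 0, 0, 0, 0, 1, -1, 0, 0, 1], [0, 0, 0, 0, 0, 0, 0, 0, 0, 0, 0, 1, -1, 0, 0], [0, 0, 0, 0, 0, 0, 0, 0, 0, 0, 0, 0, 1, -1, 0], [0, 0, 0, 0, 0, 0, 0, 0, 0, 0, 0, 0, 0, 1, -1], [0, 0, 0, 0, 0, 0, 0, 0, 0, 0, 0, 0, 0, 0, 1]]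

def Fz4 : Matrix (Fin 15) (Fin 15) ℤ := mkM 15 [[-1, -1, -1, -1, 0, 0, 0, 0, 0, 0, 0, 0, 0, 0, 0], [1, 0, 0, 0, -1, 0, 0, 0, 0, 0, 0, 0, 0, 0, 0], [0, 1, 0, 0, 0, -1, 0, 0, 0, 0, 0, 0, 0, 0, 0], [0, 0, 1, 0, 0, 0, -1, 0, 0, 0, 0, 0, 0, 0, 0], [-1, -1, -1, 0, 0, 0, 0, -1, 0, 0, 0, 0, 0, 0, 0], [1, 0, 0, 0, 0, 0, 0, 0, -1, 0, 0, 0, 0, 0, 0], [0, 1, 0, 0, 0, 0, 0, 0, 0, -1, 0, 0, 0, 0, 0], [0, 0, 1, 0, 0, 0, 0, 0, 0, 0, -1, 0, 0, 0, 0], [-1, -1, -1, 0, 0, 0, 0, 0, 0, 0, 0, -1, 0, 0, 0], [1, 0, 0, 0, 0, 0, 0, 0, 0, 0, 0, 0, -1, 0, 0], [0, 1, 0, 0, 0, 0, 0, 0, 0, 0, 0, 0, 0, -1, 0], [0, 0, 1, 0, 0, 0, 0, 0, 0, 0, 0, 0, 0, 0, -1], [-1, -1, -1, 0, 0, 0,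 0, 0, 0, 0, 0, 0, 0, 0, 0], [1, 0, 0, 0, 0, 0, 0, 0, 0, 0, 0, 0, 0, 0, 0], [0, 1, 0, 0, 0, 0, 0, 0, 0, 0, 0, 0, 0, 0, 0]]

def eL4_0 : Matrix (Fin 15) (Fin 15) ℤ := mkM 15 [[1, 0, 0, 0, 0, 0, 0, 0, 0, 0, 0, 0, 0, 0, 0], [1, -8, 0, 0, 0, 0, 0, 0, 0, 0, 0, 0, 0, 0, 0], [1, -8, 73, 0, 0, 0, 0, 0, 0, 0, 0, 0, 0, 0, 0], [1, -8, 73, -656, 0, 0, 0, 0, 0, 0, 0, 0, 0, 0, 0], [657, 649, 721, 73, 5905, 0, 0, 0, 0, 0, 0, 0, 0, 0, 0], [6489, 657, 649, 721, 73, -52496, 0, 0, 0, 0, 0, 0, 0, 0, 0], [5841, -52560, -72, 649, -5840, -8, 473113, 0, 0, 0, 0, 0, 0, 0, 0], [-648, -53208, 472320, -72, -5912, 52480, -8, -4257368, 0, 0, 0, 0, 0, 0, 0], [4250880, 4250880, 4723200, 472320, 472320, 524800, 52480, 52480, 38310400, 0, 0, 0, 0, 0, 0], [42508800, 4250880, 4250880,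 4723200, 472320, 472320, 524800, 52480, 52480, -344268800, 0, 0, 0, 0, 0], [38257920, -344380248, -648, 4250880, -38264472, -72, 472320, -4251608, -8, 52480, 3098944000, 0, 0, 0, 0], [-5832, -344379600, 3099888873, -648, -38264400, 344432097, -72, -4251600, 38270233, -8, -472400, -27894747608, 0, 0, 0], [27898999857, 27899052345, 30998416257, 3099888873, 3099894705, 3444268473, 344432097, 344432745, 382696497, 38270233, 38270305, 42521833, 251090998705, 0, 0], [278985746313, 27898999857, 27899052345, 30998416257, 3099888873, 3099894705, 3444268473, 344432097, 344432745, 382696497, 38270233, 38270305, 42521833, -2259780718112, 0], [251091471105, -2259780718104, 4724649, 27899052345, -251086746456, 524961, 3099894705, -27898527384, 58329, 344432745, -3099836376, 6481, 38270305, -344426264, 20338064733241]]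
def eU4_0 : Matrix (Fin 15) (Fin 15) ℤ := mkM 15 [[-8, 1, 1, 1, 0, 0, 0, 0, 0, 0, 0, 0, 0, 0, 0], [0, 73, 1, 1, -8, 0, 0, 0, 0, 0, 0, 0, 0, 0, 0], [0, 0, -656, 1, -8, 73, 0, 0, 0, 0, 0, 0, 0, 0, 0], [0, 0, 0, 5905, -8, 73, -656, 0, 0, 0, 0, 0, 0, 0, 0], [0, 0, 0, 0, -52496, 721, 73, 5905, 0, 0, 0, 0, 0, 0, 0], [0, 0, 0, 0, 0, 473113, 721, 73, -52496, 0, 0, 0, 0, 0, 0], [0, 0, 0, 0, 0, 0, -4257368, -5840, -8, 473113, 0, 0, 0, 0, 0], [0, 0, 0, 0, 0, 0, 0, 38310400, 52480, -8, -4257368, 0, 0, 0, 0], [0, 0, 0, 0, 0, 0, 0, 0, -344268800, 52480, 52480, 38310400, 0, 0, 0], [0, 0, 0, 0, 0, 0, 0, 0, 0, 3098944000, 52480, 52480, -344268800, 0, 0], [0, 0, 0, 0, 0, 0, 0, 0, 0, 0, -27894747608, -8, 52480, 3098944000, 0], [0, 0, 0, 0, 0, 0, 0, 0, 0, 0, 0,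 251090998705, -8, -472400, -27894747608], [0, 0, 0, 0, 0, 0, 0, 0, 0, 0, 0, 0, -2259780718112, 38270305, 42521833], [0, 0, 0, 0, 0, 0, 0, 0, 0, 0, 0, 0, 0, 20338064733241, 38270305], [0, 0, 0, 0, 0, 0, 0, 0, 0, 0, 0, 0, 0, 0, -183042582592688]]

def eL4_1 : Matrix (Fin 15) (Fin 15) ℤ := mkM 15 [[1, 0, 0, 0, 0, 0, 0, 0, 0, 0, 0, 0, 0, 0, 0], [1, -7, 0, 0, 0, 0, 0, 0, 0, 0, 0, 0, 0, 0, 0], [1, -7, 57, 0, 0, 0, 0, 0, 0, 0, 0, 0, 0, 0, 0], [1, -7, 57, -455, 0, 0, 0, 0, 0, 0, 0, 0, 0, 0, 0], [456, 449, 505, 57, 3641, 0, 0, 0, 0, 0, 0, 0, 0, 0, 0], [4040, 456, 449, 505, 57, -28679, 0, 0, 0, 0, 0, 0, 0, 0, 0], [3592, -28728, -56, 449, -3591, -7, 229881, 0, 0, 0, 0, 0, 0, 0, 0], [-448, -29176, 229320, -56, -3647, 28665, -7, -1838599, 0, 0, 0, 0, 0, 0, 0], [1834560, 1834560, 2063880,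 229320, 229320, 257985, 28665, 28665, 14705145, 0, 0, 0, 0, 0, 0], [16511040, 1834560, 1834560, 2063880, 229320, 229320, 257985, 28665, 28665, -117383175, 0, 0, 0, 0, 0], [14676480, -117444544, -448, 1834560, -14680568, -56, 229320, -1835071, -7, 28665, 939323385, 0, 0, 0, 0], [-3584, -117444096, 939782208, -448, -14680512, 117472776, -56, -1835064, 14684097, -7, -229383, -7516422151, 0, 0, 0], [7518257664, 7518286336, 8457810432, 939782208, 939785792, 1057226304, 117472776, 117473224, 132153288, 14684097, 14684153, 16519161, 60146061305, 0, 0], [67662483456, 7518257664, 7518286336, 8457810432, 939782208, 939785792, 1057226304, 117472776, 117473224, 132153288, 14684097, 14684153, 16519161, -481153806343, 0], [60146290688, -481153806336, 2064896, 7518286336, -60144225792, 258112, 939785792, -7518028224, 32264, 117473224, -939753528, 4033, 14684153, -117469191, 3849245134841]]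
def eU4_1 : Matrix (Fin 15) (Fin 15) ℤ := mkM 15 [[-7, 1, 1, 1, 0, 0, 0, 0, 0, 0, 0, 0, 0, 0, 0], [0, 57, 1, 1, -7, 0, 0, 0, 0, 0, 0, 0, 0, 0, 0], [0, 0, -455, 1, -7, 57, 0, 0, 0, 0, 0, 0, 0, 0, 0], [0, 0, 0, 3641, -7, 57, -455, 0, 0, 0, 0, 0, 0, 0, 0], [0, 0, 0, 0, -28679, 505, 57, 3641, 0, 0, 0, 0, 0, 0, 0], [0, 0, 0, 0, 0, 229881, 505, 57, -28679, 0, 0, 0, 0, 0, 0], [0, 0, 0, 0, 0, 0, -1838599, -3591, -7, 229881, 0, 0, 0, 0, 0], [0, 0, 0, 0, 0, 0, 0, 14705145, 28665, -7, -1838599, 0, 0, 0, 0], [0, 0, 0, 0, 0, 0, 0, 0, -117383175, 28665, 28665, 14705145, 0, 0, 0], [0, 0, 0, 0, 0, 0, 0, 0, 0, 939323385, 28665, 28665, -117383175, 0, 0], [0, 0, 0, 0, 0, 0, 0, 0, 0, 0, -7516422151, -7, 28665, 939323385, 0], [0, 0, 0, 0, 0, 0, 0, 0, 0, 0, 0,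 60146061305, -7, -229383, -7516422151], [0, 0, 0, 0, 0, 0, 0, 0, 0, 0, 0, 0, -481153806343, 14684153, 16519161], [0, 0, 0, 0, 0, 0, 0, 0, 0, 0, 0, 0, 0, 3849245134841, 14684153], [0, 0, 0, 0, 0, 0, 0, 0, 0, 0, 0, 0, 0, 0, -30793961074695]]

def eL4_2 : Matrix (Fin 15) (Fin 15) ℤ := mkM 15 [[1, 0, 0, 0, 0, 0, 0, 0, 0, 0, 0, 0, 0, 0, 0], [1, -6, 0, 0, 0, 0, 0, 0, 0, 0, 0, 0, 0, 0, 0], [1, -6, 43, 0, 0, 0, 0, 0, 0, 0, 0, 0, 0, 0, 0], [1, -6, 43, -300, 0, 0, 0, 0, 0, 0, 0, 0, 0, 0, 0], [301, 295, 337, 43, 2101, 0, 0, 0, 0, 0, 0, 0, 0, 0, 0], [2359, 301, 295, 337, 43, -14412, 0, 0, 0, 0, 0, 0, 0, 0, 0], [2065, -14448, -42, 295, -2064, -6, 101179, 0, 0, 0, 0, 0, 0, 0, 0], [-294, -14742, 100800, -42, -2106, 14400, -6, -707958, 0, 0, 0, 0, 0, 0, 0], [705600, 705600, 806400, 100800,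 100800, 115200, 14400, 14400, 4953600, 0, 0, 0, 0, 0, 0], [5644800, 705600, 705600, 806400, 100800, 100800, 115200, 14400, 14400, -34560000, 0, 0, 0, 0, 0], [4939200, -34591158, -294, 705600, -4941594, -42, 100800, -705942, -6, 14400, 242035200, 0, 0, 0, 0], [-2058, -34590864, 242236939, -294, -4941552, 34605277, -42, -705936, 4943611, -6, -100848, -1694952342, 0, 0, 0], [1695658573, 1695672979, 1937794621, 242236939, 242238997, 276827803, 34605277, 34605571, 39546829, 4943611, 4943653, 5649547, 11869610005, 0, 0], [13564562347, 1695658573, 1695672979, 1937794621, 242236939, 242238997, 276827803, 34605277, 34605571, 39546829, 4943611, 4943653, 5649547, -83082326424, 0], [11869710853, -83082326418, 807079, 1695672979, -11868903774, 115297, 242238997, -1695557682, 16471, 34605571, -242222526, 2353, 4943653, -34603218, 581581228579]]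
def eU4_2 : Matrix (Fin 15) (Fin 15) ℤ := mkM 15 [[-6, 1, 1, 1, 0, 0, 0, 0, 0, 0, 0, 0, 0, 0, 0], [0, 43, 1, 1, -6, 0, 0, 0, 0, 0, 0, 0, 0, 0, 0], [0, 0, -300, 1, -6, 43, 0, 0, 0, 0, 0, 0, 0, 0, 0], [0, 0, 0, 2101, -6, 43, -300, 0, 0, 0, 0, 0, 0, 0, 0], [0, 0, 0, 0, -14412, 337, 43, 2101, 0, 0, 0, 0, 0, 0, 0], [0, 0, 0, 0, 0, 101179, 337, 43, -14412, 0, 0, 0, 0, 0, 0], [0, 0, 0, 0, 0, 0, -707958, -2064, -6, 101179, 0, 0, 0, 0, 0], [0, 0, 0, 0, 0, 0, 0, 4953600, 14400, -6, -707958, 0, 0, 0, 0], [0, 0, 0, 0, 0, 0, 0, 0, -34560000, 14400, 14400, 4953600, 0, 0, 0], [0, 0, 0, 0, 0, 0, 0, 0, 0, 242035200, 14400, 14400, -34560000, 0, 0], [0, 0, 0, 0, 0, 0, 0, 0, 0, 0, -1694952342, -6, 14400, 242035200, 0], [0, 0, 0, 0, 0, 0, 0, 0, 0, 0, 0, 11869610005,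 -6, -100848, -1694952342], [0, 0, 0, 0, 0, 0, 0, 0, 0, 0, 0, 0, -83082326424, 4943653, 5649547], [0, 0, 0, 0, 0, 0, 0, 0, 0, 0, 0, 0, 0, 581581228579, 4943653], [0, 0, 0, 0, 0, 0, 0, 0, 0, 0, 0, 0, 0, 0, -4071068597700]]

def eL4_3 : Matrix (Fin 15) (Fin 15) ℤ := mkM 15 [[1, 0, 0, 0, 0, 0, 0, 0, 0, 0, 0, 0, 0, 0, 0], [1, -5, 0, 0, 0, 0, 0, 0, 0, 0, 0, 0, 0, 0, 0], [1, -5, 31, 0, 0, 0, 0, 0, 0, 0, 0, 0, 0, 0, 0], [1, -5, 31, -185, 0, 0, 0, 0, 0, 0, 0, 0, 0, 0, 0], [186, 181, 211, 31, 1111, 0, 0, 0, 0, 0, 0, 0, 0, 0, 0], [1266, 186, 181, 211, 31, -6485, 0, 0, 0, 0, 0, 0, 0, 0, 0], [1086, -6510, -30, 181, -1085, -5, 39091, 0, 0, 0, 0, 0, 0, 0, 0], [-180, -6690, 38850, -30, -1115, 6475, -5, -234365, 0, 0, 0, 0, 0, 0, 0], [233100, 233100, 271950, 38850, 38850, 45325,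 6475, 6475, 1405075, 0, 0, 0, 0, 0, 0], [1631700, 233100, 233100, 271950, 38850, 38850, 45325, 6475, 6475, -8385125, 0, 0, 0, 0, 0], [1398600, -8399340, -180, 233100, -1399890, -30, 38850, -233315, -5, 6475, 50356075, 0, 0, 0, 0], [-1080, -8399160, 50433876, -180, -1399860, 8405646, -30, -233310, 1400941, -5, -38885, -302369765, 0, 0, 0], [302603256, 302609736, 352998216, 50433876, 50434956, 58833036, 8405646, 8405826, 9805506, 1400941, 1400971, 1634251, 1815619531, 0, 0], [2117989296, 302603256, 302609736, 352998216, 50433876, 50434956, 58833036, 8405646, 8405826, 9805506, 1400941, 1400971, 1634251, -10892316245, 0], [1815658416, -10892316240, 272376, 302609736, -1815386040, 45396, 50434956, -302564340, 7566, 8405826, -50427390, 1261, 1400971, -8404565, 65355298411]]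
def eU4_3 : Matrix (Fin 15) (Fin 15) ℤ := mkM 15 [[-5, 1, 1, 1, 0, 0, 0, 0, 0, 0, 0, 0, 0, 0, 0], [0, 31, 1, 1, -5, 0, 0, 0, 0, 0, 0, 0, 0, 0, 0], [0, 0, -185, 1, -5, 31, 0, 0, 0, 0, 0, 0, 0, 0, 0], [0, 0, 0, 1111, -5, 31, -185, 0, 0, 0, 0, 0, 0, 0, 0], [0, 0, 0, 0, -6485, 211, 31, 1111, 0, 0, 0, 0, 0, 0, 0], [0, 0, 0, 0, 0, 39091, 211, 31, -6485, 0, 0, 0, 0, 0, 0], [0, 0, 0, 0, 0, 0, -234365, -1085, -5, 39091, 0, 0, 0, 0, 0], [0, 0, 0, 0, 0, 0, 0, 1405075, 6475, -5, -234365, 0, 0, 0, 0], [0, 0, 0, 0, 0, 0, 0, 0, -8385125, 6475, 6475, 1405075, 0, 0, 0], [0, 0, 0, 0, 0, 0, 0, 0, 0, 50356075, 6475, 6475, -8385125, 0, 0], [0, 0, 0, 0, 0, 0, 0, 0, 0, 0, -302369765, -5, 6475, 50356075, 0], [0, 0, 0, 0, 0, 0, 0, 0, 0, 0, 0, 1815619531,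 -5, -38885, -302369765], [0, 0, 0, 0, 0, 0, 0, 0, 0, 0, 0, 0, -10892316245, 1400971, 1634251], [0, 0, 0, 0, 0, 0, 0, 0, 0, 0, 0, 0, 0, 65355298411, 1400971], [0, 0, 0, 0, 0, 0, 0, 0, 0, 0, 0, 0, 0, 0, -392131789205]]

def eL4_4 : Matrix (Fin 15) (Fin 15) ℤ := mkM 15 [[1, 0, 0, 0, 0, 0, 0, 0, 0, 0, 0, 0, 0, 0, 0], [1, -4, 0, 0, 0, 0, 0, 0, 0, 0, 0, 0, 0, 0, 0], [1, -4, 21, 0, 0, 0, 0, 0, 0, 0, 0, 0, 0, 0, 0], [1, -4, 21, -104, 0, 0, 0, 0, 0, 0, 0, 0, 0, 0, 0], [105, 101, 121, 21, 521, 0, 0, 0, 0, 0, 0, 0, 0, 0, 0], [605, 105, 101, 121, 21, -2504, 0, 0, 0, 0, 0, 0, 0, 0, 0], [505, -2520, -20, 101, -504, -4, 12621, 0, 0, 0, 0, 0, 0, 0, 0], [-100, -2620, 12480, -20, -524, 2496, -4, -63004, 0, 0, 0, 0, 0, 0, 0], [62400, 62400, 74880, 12480, 12480, 14976, 2496, 2496,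 314496, 0, 0, 0, 0, 0, 0], [374400, 62400, 62400, 74880, 12480, 12480, 14976, 2496, 2496, -1557504, 0, 0, 0, 0, 0], [312000, -1563100, -100, 62400, -312620, -20, 12480, -62524, -4, 2496, 7802496, 0, 0, 0, 0], [-500, -1563000, 7827525, -100, -312600, 1565505, -20, -62520, 313101, -4, -12504, -39075004, 0, 0, 0], [39137625, 39140125, 46952625, 7827525, 7828025, 9390525, 1565505, 1565605, 1878105, 313101, 313121, 375621, 195688121, 0, 0], [234763125, 39137625, 39140125, 46952625, 7827525, 7828025, 9390525, 1565505, 1565605, 1878105, 313101, 313121, 375621, -978127504, 0], [195700625, -978127500, 75125, 39140125, -195625500, 15025, 7828025, -39125100, 3005, 1565605, -7825020, 601, 313121, -1565004, 4890950621]]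
def eU4_4 : Matrix (Fin 15) (Fin 15) ℤ := mkM 15 [[-4, 1, 1, 1, 0, 0, 0, 0, 0, 0, 0, 0, 0, 0, 0], [0, 21, 1, 1, -4, 0, 0, 0, 0, 0, 0, 0, 0, 0, 0], [0, 0, -104, 1, -4, 21, 0, 0, 0, 0, 0, 0, 0, 0, 0], [0, 0, 0, 521, -4, 21, -104, 0, 0, 0, 0, 0, 0, 0, 0], [0, 0, 0, 0, -2504, 121, 21, 521, 0, 0, 0, 0, 0, 0, 0], [0, 0, 0, 0, 0, 12621, 121, 21, -2504, 0, 0, 0, 0, 0, 0], [0, 0, 0, 0, 0, 0, -63004, -504, -4, 12621, 0, 0, 0, 0, 0], [0, 0, 0, 0, 0, 0, 0, 314496, 2496, -4, -63004, 0, 0, 0, 0], [0, 0, 0, 0, 0, 0, 0, 0, -1557504, 2496, 2496, 314496, 0, 0, 0], [0, 0, 0, 0, 0, 0, 0, 0, 0, 7802496, 2496, 2496, -1557504, 0, 0], [0, 0, 0, 0, 0, 0, 0, 0, 0, 0, -39075004, -4, 2496, 7802496, 0], [0, 0, 0, 0, 0, 0, 0, 0, 0, 0, 0, 195688121, -4,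 -12504, -39075004], [0, 0, 0, 0, 0, 0, 0, 0, 0, 0, 0, 0, -978127504, 313121, 375621], [0, 0, 0, 0, 0, 0, 0, 0, 0, 0, 0, 0, 0, 4890950621, 313121], [0, 0, 0, 0, 0, 0, 0, 0, 0, 0, 0, 0, 0, 0, -24454752504]]

def eL4_5 : Matrix (Fin 15) (Fin 15) ℤ := mkM 15 [[1, 0, 0, 0, 0, 0, 0, 0, 0, 0, 0, 0, 0, 0, 0], [1, -3, 0, 0, 0, 0, 0, 0, 0, 0, 0, 0, 0, 0, 0], [1, -3, 13, 0, 0, 0, 0, 0, 0, 0, 0, 0, 0, 0, 0], [1, -3, 13, -51, 0, 0, 0, 0, 0, 0, 0, 0, 0, 0, 0], [52, 49, 61, 13, 205, 0, 0, 0, 0, 0, 0, 0, 0, 0, 0], [244, 52, 49, 61, 13, -771, 0, 0, 0, 0, 0, 0, 0, 0, 0], [196, -780, -12, 49, -195, -3, 3133, 0, 0, 0, 0, 0, 0, 0, 0], [-48, -828, 3060, -12, -207, 765, -3, -12483, 0, 0, 0, 0, 0, 0, 0], [12240, 12240, 15300, 3060, 3060, 3825, 765, 765, 49725, 0, 0,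 0, 0, 0, 0], [61200, 12240, 12240, 15300, 3060, 3060, 3825, 765, 765, -195075, 0, 0, 0, 0, 0], [48960, -196848, -48, 12240, -49212, -12, 3060, -12303, -3, 765, 784125, 0, 0, 0, 0], [-192, -196800, 790288, -48, -49200, 197572, -12, -12300, 49393, -3, -3075, -3148803, 0, 0, 0], [3161152, 3161920, 3948352, 790288, 790480, 987088, 197572, 197620, 246772, 49393, 49405, 61693, 12644605, 0, 0], [15793408, 3161152, 3161920, 3948352, 790288, 790480, 987088, 197572, 197620, 246772, 49393, 49405, 61693, -50529027, 0], [12647680, -50529024, 15424, 3161920, -12632256, 3856, 790480, -3158064, 964, 197620, -789516, 241, 49405, -197379, 202165501]]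
def eU4_5 : Matrix (Fin 15) (Fin 15) ℤ := mkM 15 [[-3, 1, 1, 1, 0, 0, 0, 0, 0, 0, 0, 0, 0, 0, 0], [0, 13, 1, 1, -3, 0, 0, 0, 0, 0, 0, 0, 0, 0, 0], [0, 0, -51, 1, -3, 13, 0, 0, 0, 0, 0, 0, 0, 0, 0], [0, 0, 0, 205, -3, 13, -51, 0, 0, 0, 0, 0, 0, 0, 0], [0, 0, 0, 0, -771, 61, 13, 205, 0, 0, 0, 0, 0, 0, 0], [0, 0, 0, 0, 0, 3133, 61, 13, -771, 0, 0, 0, 0, 0, 0], [0, 0, 0, 0, 0, 0, -12483, -195, -3, 3133, 0, 0, 0, 0, 0], [0, 0, 0, 0, 0, 0, 0, 49725, 765, -3, -12483, 0, 0, 0, 0], [0, 0, 0, 0, 0, 0, 0, 0, -195075, 765, 765, 49725, 0, 0, 0], [0, 0, 0, 0, 0, 0, 0, 0, 0, 784125, 765, 765, -195075, 0, 0], [0, 0, 0, 0, 0, 0, 0, 0, 0, 0, -3148803, -3, 765, 784125, 0], [0, 0, 0, 0, 0, 0, 0, 0, 0, 0, 0, 12644605, -3, -3075, -3148803], [0,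 0, 0, 0, 0, 0, 0, 0, 0, 0, 0, 0, -50529027, 49405, 61693], [0, 0, 0, 0, 0, 0, 0, 0, 0, 0, 0, 0, 0, 202165501, 49405], [0, 0, 0, 0, 0, 0, 0, 0, 0, 0, 0, 0, 0, 0, -808661763]]

def eL4_6 : Matrix (Fin 15) (Fin 15) ℤ := mkM 15 [[1, 0, 0, 0, 0, 0, 0, 0, 0, 0, 0, 0, 0, 0, 0], [1, -2, 0, 0, 0, 0, 0, 0, 0, 0, 0, 0, 0, 0, 0], [1, -2, 7, 0, 0, 0, 0, 0, 0, 0, 0, 0, 0, 0, 0], [1, -2, 7, -20, 0, 0, 0, 0, 0, 0, 0, 0, 0, 0, 0], [21, 19, 25, 7, 61, 0, 0, 0, 0, 0, 0, 0, 0, 0, 0], [75, 21, 19, 25, 7, -164, 0, 0, 0, 0, 0, 0, 0, 0, 0], [57, -168, -6, 19, -56, -2, 511, 0, 0, 0, 0, 0, 0, 0, 0], [-18, -186, 480, -6, -62, 160, -2, -1514, 0, 0, 0, 0, 0, 0, 0], [1440, 1440, 1920, 480, 480, 640, 160, 160, 4480, 0, 0, 0, 0, 0, 0], [5760, 1440,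 1440, 1920, 480, 480, 640, 160, 160, -12800, 0, 0, 0, 0, 0], [4320, -13194, -18, 1440, -4398, -6, 480, -1466, -2, 160, 39040, 0, 0, 0, 0], [-54, -13176, 40023, -18, -4392, 13341, -6, -1464, 4447, -2, -488, -118586, 0, 0, 0], [120069, 120231, 159597, 40023, 40077, 53199, 13341, 13359, 17733, 4447, 4453, 5911, 360205, 0, 0], [478791, 120069, 120231, 159597, 40023, 40077, 53199, 13341, 13359, 17733, 4447, 4453, 5911, -1076168, 0], [360693, -1076166, 1971, 120231, -358722, 657, 40077, -119574, 219, 13359, -39858, 73, 4453, -13286, 3232951]]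
def eU4_6 : Matrix (Fin 15) (Fin 15) ℤ := mkM 15 [[-2, 1, 1, 1, 0, 0, 0, 0, 0, 0, 0, 0, 0, 0, 0], [0, 7, 1, 1, -2, 0, 0, 0, 0, 0, 0, 0, 0, 0, 0], [0, 0, -20, 1, -2, 7, 0, 0, 0, 0, 0, 0, 0, 0, 0], [0, 0, 0, 61, -2, 7, -20, 0, 0, 0, 0, 0, 0, 0, 0], [0, 0, 0, 0, -164, 25, 7, 61, 0, 0, 0, 0, 0, 0, 0], [0, 0, 0, 0, 0, 511, 25, 7, -164, 0, 0, 0, 0, 0, 0], [0, 0, 0, 0, 0, 0, -1514, -56, -2, 511, 0, 0, 0, 0, 0], [0, 0, 0, 0, 0, 0, 0, 4480, 160, -2, -1514, 0, 0, 0, 0], [0, 0, 0, 0, 0, 0, 0, 0, -12800, 160, 160, 4480, 0, 0, 0], [0, 0, 0, 0, 0, 0, 0, 0, 0, 39040, 160, 160, -12800, 0, 0], [0, 0, 0, 0, 0, 0, 0, 0, 0, 0, -118586, -2, 160, 39040, 0], [0, 0, 0, 0, 0, 0, 0, 0, 0, 0, 0, 360205, -2, -488, -118586], [0, 0, 0,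 0, 0, 0, 0, 0, 0, 0, 0, 0, -1076168, 4453, 5911], [0, 0, 0, 0, 0, 0, 0, 0, 0, 0, 0, 0, 0, 3232951, 4453], [0, 0, 0, 0, 0, 0, 0, 0, 0, 0, 0, 0, 0, 0, -9698780]]

def eL4_7 : Matrix (Fin 15) (Fin 15) ℤ := mkM 15 [[1, 0, 0, 0, 0, 0, 0, 0, 0, 0, 0, 0, 0, 0, 0], [1, -1, 0, 0, 0, 0, 0, 0, 0, 0, 0, 0, 0, 0, 0], [1, -1, 3, 0, 0, 0, 0, 0, 0, 0, 0, 0, 0, 0, 0], [1, -1, 3, -5, 0, 0, 0, 0, 0, 0, 0, 0, 0, 0, 0], [6, 5, 7, 3, 11, 0, 0, 0, 0, 0, 0, 0, 0, 0, 0], [14, 6, 5, 7, 3, -17, 0, 0, 0, 0, 0, 0, 0, 0, 0], [10, -18, -2, 5, -9, -1, 39, 0, 0, 0, 0, 0, 0, 0, 0], [-4, -22, 30, -2, -11, 15, -1, -73, 0, 0, 0, 0, 0, 0, 0], [60, 60, 90, 30, 30, 45, 15, 15, 135, 0, 0, 0, 0, 0, 0], [180, 60, 60, 90, 30, 30, 45,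 15, 15, -225, 0, 0, 0, 0, 0], [120, -268, -4, 60, -134, -2, 30, -67, -1, 15, 495, 0, 0, 0, 0], [-8, -264, 564, -4, -132, 282, -2, -66, 141, -1, -33, -1057, 0, 0, 0], [1128, 1144, 1656, 564, 572, 828, 282, 286, 414, 141, 143, 207, 2255, 0, 0], [3312, 1128, 1144, 1656, 564, 572, 828, 282, 286, 414, 141, 143, 207, -4369, 0], [2288, -4368, 104, 1144, -2184, 52, 572, -1092, 26, 286, -546, 13, 143, -273, 8879]]
def eU4_7 : Matrix (Fin 15) (Fin 15) ℤ := mkM 15 [[-1, 1, 1, 1, 0, 0, 0, 0, 0, 0, 0, 0, 0, 0, 0], [0, 3, 1, 1, -1, 0, 0, 0, 0, 0, 0, 0, 0, 0, 0], [0, 0, -5, 1, -1, 3, 0, 0, 0, 0, 0, 0, 0, 0, 0], [0, 0, 0, 11, -1, 3, -5, 0, 0, 0, 0, 0, 0, 0, 0], [0, 0, 0, 0, -17, 7, 3, 11, 0, 0, 0, 0, 0, 0, 0], [0, 0, 0, 0, 0, 39, 7, 3, -17, 0, 0, 0, 0, 0, 0], [0, 0, 0, 0, 0, 0, -73, -9,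 -1, 39, 0, 0, 0, 0, 0], [0, 0, 0, 0, 0, 0, 0, 135, 15, -1, -73, 0, 0, 0, 0], [0, 0, 0, 0, 0, 0, 0, 0, -225, 15, 15, 135, 0, 0, 0], [0, 0, 0, 0, 0, 0, 0, 0, 0, 495, 15, 15, -225, 0, 0], [0, 0, 0, 0, 0, 0, 0, 0, 0, 0, -1057, -1, 15, 495, 0], [0, 0, 0, 0, 0, 0, 0, 0, 0, 0, 0, 2255, -1, -33, -1057], [0, 0, 0, 0, 0, 0, 0, 0, 0, 0, 0, 0, -4369, 143, 207], [0, 0, 0, 0, 0, 0, 0, 0, 0, 0, 0, 0, 0, 8879, 143], [0, 0, 0, 0, 0, 0, 0, 0, 0, 0, 0, 0, 0, 0, -17745]]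

def eL4_8 : Matrix (Fin 15) (Fin 15) ℤ := mkM 15 [[1, 0, 0, 0, 0, 0, 0, 0, 0, 0, 0, 0, 0, 0, 0], [1, 1, 0, 0, 0, 0, 0, 0, 0, 0, 0, 0, 0, 0, 0], [1, 1, 1, 0, 0, 0, 0, 0, 0, 0, 0, 0, 0, 0, 0], [1, 1, 1, 1, 0, 0, 0, 0, 0, 0, 0, 0, 0, 0, 0], [0, 1, 1, 1, 1, 0, 0, 0, 0, 0, 0, 0, 0, 0, 0], [0, 0, 1, 1, 1, 1, 0, 0, 0, 0, 0, 0, 0, 0, 0], [0, 0, 0, 1, 1, 1, 1, 0, 0, 0, 0, 0, 0, 0, 0], [0, 0, 0, 0, 1, 1, 1, 1, 0, 0, 0, 0, 0, 0, 0], [0, 0, 0, 0, 0, 1, 1, 1, 1, 0, 0, 0, 0, 0, 0], [0, 0, 0, 0, 0, 0, 1, 1, 1, 1, 0, 0, 0, 0, 0], [0, 0, 0, 0, 0, 0, 0, 1, 1, 1, 1, 0, 0, 0, 0], [0, 0, 0, 0, 0, 0, 0, 0, 1, 1, 1, 1, 0, 0, 0], [0, 0, 0, 0, 0, 0, 0,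 0, 0, 1, 1, 1, 1, 0, 0], [0, 0, 0, 0, 0, 0, 0, 0, 0, 0, 1, 1, 1, 1, 0], [0, 0, 0, 0, 0, 0, 0, 0, 0, 0, 0, 1, 1, 1, 1]]
def eU4_8 : Matrix (Fin 15) (Fin 15) ℤ := mkM 15 [[1, 1, 1, 1, 0, 0, 0, 0, 0, 0, 0, 0, 0, 0, 0], [0, 1, 1, 1, 1, 0, 0, 0, 0, 0, 0, 0, 0, 0, 0], [0, 0, 1, 1, 1, 1, 0, 0, 0, 0, 0, 0, 0, 0, 0], [0, 0, 0, 1, 1, 1, 1, 0, 0, 0, 0, 0, 0, 0, 0], [0, 0, 0, 0, 1, 1, 1, 1, 0, 0, 0, 0, 0, 0, 0], [0, 0, 0, 0, 0, 1, 1, 1, 1, 0, 0, 0, 0, 0, 0], [0, 0, 0, 0, 0, 0, 1, 1, 1, 1, 0, 0, 0, 0, 0], [0, 0, 0, 0, 0, 0, 0, 1, 1, 1, 1, 0, 0, 0, 0], [0, 0, 0, 0, 0, 0, 0, 0, 1, 1, 1, 1, 0, 0, 0], [0, 0, 0, 0, 0, 0, 0, 0, 0, 1, 1, 1, 1, 0,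 0], [0, 0, 0, 0, 0, 0, 0, 0, 0, 0, 1, 1, 1, 1, 0], [0, 0, 0, 0, 0, 0, 0, 0, 0, 0, 0, 1, 1, 1, 1], [0, 0, 0, 0, 0, 0, 0, 0, 0, 0, 0, 0, 1, 1, 1], [0, 0, 0, 0, 0, 0, 0, 0, 0, 0, 0, 0, 0, 1, 1], [0, 0, 0, 0, 0, 0, 0, 0, 0, 0, 0, 0, 0, 0, 1]]

def eL4_9 : Matrix (Fin 15) (Fin 15) ℤ := mkM 15 [[1, 0, 0, 0, 0, 0, 0, 0, 0, 0, 0, 0, 0, 0, 0], [1, 3, 0, 0, 0, 0, 0, 0, 0, 0, 0, 0, 0, 0, 0], [1, 3, 7, 0, 0, 0, 0, 0, 0, 0, 0, 0, 0, 0, 0], [1, 3, 7, 15, 0, 0, 0, 0, 0, 0, 0, 0, 0, 0, 0], [-14, -11, -5, 7, 31, 0, 0, 0, 0, 0, 0, 0, 0, 0, 0], [10, -14, -11, -5, 7, 51, 0, 0, 0, 0, 0, 0, 0, 0, 0], [22, 42, -6, -11, -21, 3, 91, 0, 0, 0, 0, 0, 0, 0, 0], [12, 54, 90, -6, -27, -45,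 3, 171, 0, 0, 0, 0, 0, 0, 0], [-180, -180, -90, 90, 90, 45, -45, -45, 315, 0, 0, 0, 0, 0, 0], [180, -180, -180, -90, 90, 90, 45, -45, -45, 675, 0, 0, 0, 0, 0], [360, 756, 12, -180, -378, -6, 90, 189, 3, -45, 1395, 0, 0, 0, 0], [-24, 744, 1588, 12, -372, -794, -6, 186, 397, 3, -93, 2979, 0, 0, 0], [-3176, -3224, -1688, 1588, 1612, 844, -794, -806, -422, 397, 403, 211, 6355, 0, 0], [3376, -3176, -3224, -1688, 1588, 1612, 844, -794, -806, -422, 397, 403, 211, 13107, 0], [6448, 13104, -104, -3224, -6552, 52, 1612, 3276, -26, -806, -1638, 13, 403, 819, 26611]]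
def eU4_9 : Matrix (Fin 15) (Fin 15) ℤ := mkM 15 [[3, 1, 1, 1, 0, 0, 0, 0, 0, 0, 0, 0, 0, 0, 0], [0, 7, 1, 1, 3, 0, 0, 0, 0, 0, 0, 0, 0, 0, 0], [0, 0, 15, 1, 3, 7, 0, 0, 0, 0, 0, 0, 0, 0, 0], [0, 0, 0, 31, 3, 7, 15, 0, 0, 0, 0, 0, 0, 0, 0], [0, 0, 0, 0, 51, -5, 7, 31, 0, 0, 0, 0, 0, 0, 0], [0, 0, 0, 0, 0, 91, -5, 7, 51, 0, 0, 0, 0, 0, 0], [0, 0, 0, 0, 0, 0, 171, -21, 3, 91, 0, 0, 0, 0, 0], [0, 0, 0, 0, 0, 0, 0, 315, -45, 3, 171, 0, 0, 0, 0], [0, 0, 0, 0, 0, 0, 0, 0, 675, -45, -45, 315, 0, 0, 0], [0, 0, 0, 0, 0, 0, 0, 0, 0, 1395, -45, -45, 675, 0, 0], [0, 0, 0, 0, 0, 0, 0, 0, 0, 0, 2979, 3, -45, 1395, 0], [0, 0, 0, 0, 0, 0, 0, 0, 0, 0, 0, 6355, 3, -93, 2979], [0, 0, 0, 0, 0, 0,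 0, 0, 0, 0, 0, 0, 13107, 403, 211], [0, 0, 0, 0, 0, 0, 0, 0, 0, 0, 0, 0, 0, 26611, 403], [0, 0, 0, 0, 0, 0, 0, 0, 0, 0, 0, 0, 0, 0, 53235]]

def eL4_10 : Matrix (Fin 15) (Fin 15) ℤ := mkM 15 [[1, 0, 0, 0, 0, 0, 0, 0, 0, 0, 0, 0, 0, 0, 0], [1, 4, 0, 0, 0, 0, 0, 0, 0, 0, 0, 0, 0, 0, 0], [1, 4, 13, 0, 0, 0, 0, 0, 0, 0, 0, 0, 0, 0, 0], [1, 4, 13, 40, 0, 0, 0, 0, 0, 0, 0, 0, 0, 0, 0], [-39, -35, -23, 13, 121, 0, 0, 0, 0, 0, 0, 0, 0, 0, 0], [69, -39, -35, -23, 13, 328, 0, 0, 0, 0, 0, 0, 0, 0, 0], [105, 312, -12, -35, -104, 4, 949, 0, 0, 0, 0, 0, 0, 0, 0], [36, 348, 960, -12, -116, -320, 4, 2812, 0, 0, 0, 0, 0, 0, 0], [-2880, -2880, -1920, 960, 960, 640, -320, -320, 8320, 0, 0, 0, 0, 0, 0], [5760, -2880, -2880, -1920, 960, 960, 640, -320,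 -320, 25600, 0, 0, 0, 0, 0], [8640, 26172, 36, -2880, -8724, -12, 960, 2908, 4, -320, 77440, 0, 0, 0, 0], [-108, 26136, 79389, 36, -8712, -26463, -12, 2904, 8821, 4, -968, 235228, 0, 0, 0], [-238167, -238491, -159759, 79389, 79497, 53253, -26463, -26499, -17751, 8821, 8833, 5917, 714505, 0, 0], [479277, -238167, -238491, -159759, 79389, 79497, 53253, -26463, -26499, -17751, 8821, 8833, 5917, 2152336, 0], [715473, 2152332, -1971, -238491, -717444, 657, 79497, 239148, -219, -26499, -79716, 73, 8833, 26572, 6465829]]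
def eU4_10 : Matrix (Fin 15) (Fin 15) ℤ := mkM 15 [[4, 1, 1, 1, 0, 0, 0, 0, 0, 0, 0, 0, 0, 0, 0], [0, 13, 1, 1, 4, 0, 0, 0, 0, 0, 0, 0, 0, 0, 0], [0, 0, 40, 1, 4, 13, 0, 0, 0, 0, 0, 0, 0, 0, 0], [0, 0, 0, 121, 4, 13, 40, 0, 0, 0, 0, 0, 0, 0, 0], [0, 0, 0, 0, 328, -23, 13, 121, 0, 0, 0, 0, 0, 0, 0], [0, 0, 0, 0, 0, 949, -23, 13, 328, 0, 0, 0, 0, 0, 0], [0, 0, 0, 0, 0, 0, 2812, -104, 4, 949, 0, 0, 0, 0, 0], [0, 0, 0, 0, 0, 0, 0, 8320, -320, 4, 2812, 0, 0, 0, 0], [0, 0, 0, 0, 0, 0, 0, 0, 25600, -320, -320, 8320, 0, 0, 0], [0, 0, 0, 0, 0, 0, 0, 0, 0, 77440, -320, -320, 25600, 0, 0], [0, 0, 0, 0, 0, 0, 0, 0, 0, 0, 235228, 4, -320, 77440, 0], [0, 0, 0, 0, 0, 0, 0, 0, 0, 0, 0, 714505, 4, -968, 235228], [0, 0, 0, 0,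 0, 0, 0, 0, 0, 0, 0, 0, 2152336, 8833, 5917], [0, 0, 0, 0, 0, 0, 0, 0, 0, 0, 0, 0, 0, 6465829, 8833], [0, 0, 0, 0, 0, 0, 0, 0, 0, 0, 0, 0, 0, 0, 19397560]]

def eL4_11 : Matrix (Fin 15) (Fin 15) ℤ := mkM 15 [[1, 0, 0, 0, 0, 0, 0, 0, 0, 0, 0, 0, 0, 0, 0], [1, 5, 0, 0, 0, 0, 0, 0, 0, 0, 0, 0, 0, 0, 0], [1, 5, 21, 0, 0, 0, 0, 0, 0, 0, 0, 0, 0, 0, 0], [1, 5, 21, 85, 0, 0, 0, 0, 0, 0, 0, 0, 0, 0, 0], [-84, -79, -59, 21, 341, 0, 0, 0, 0, 0, 0, 0, 0, 0, 0], [236, -84, -79, -59, 21, 1285, 0, 0, 0, 0, 0, 0, 0, 0, 0], [316, 1260, -20, -79, -315, 5, 5061, 0, 0, 0, 0, 0, 0, 0, 0], [80, 1340, 5100, -20, -335, -1275, 5, 20165, 0, 0, 0, 0, 0, 0, 0], [-20400, -20400, -15300, 5100, 5100, 3825, -1275, -1275, 80325, 0, 0, 0, 0, 0, 0], [61200, -20400,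 -20400, -15300, 5100, 5100, 3825, -1275, -1275, 325125, 0, 0, 0, 0, 0], [81600, 327440, 80, -20400, -81860, -20, 5100, 20465, 5, -1275, 1304325, 0, 0, 0, 0], [-320, 327360, 1314576, 80, -81840, -328644, -20, 20460, 82161, 5, -5115, 5237765, 0, 0, 0], [-5258304, -5259584, -3948864, 1314576, 1314896, 987216, -328644, -328724, -246804, 82161, 82181, 61701, 21033221, 0, 0], [15795456, -5258304, -5259584, -3948864, 1314576, 1314896, 987216, -328644, -328724, -246804, 82161, 82181, 61701, 84215045, 0], [21038336, 84215040, -15424, -5259584, -21053760, 3856, 1314896, 5263440, -964, -328724, -1315860, 241, 82181, 328965, 336942341]]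
def eU4_11 : Matrix (Fin 15) (Fin 15) ℤ := mkM 15 [[5, 1, 1, 1, 0, 0, 0, 0, 0, 0, 0, 0, 0, 0, 0], [0, 21, 1, 1, 5, 0, 0, 0, 0, 0, 0, 0, 0, 0, 0], [0, 0, 85, 1, 5, 21, 0, 0, 0, 0, 0, 0, 0, 0, 0], [0, 0, 0, 341, 5, 21, 85, 0, 0, 0, 0, 0, 0, 0, 0], [0, 0, 0, 0, 1285, -59, 21, 341, 0, 0, 0, 0, 0, 0, 0], [0, 0, 0, 0, 0, 5061, -59, 21, 1285, 0, 0, 0, 0, 0, 0], [0, 0, 0, 0, 0, 0, 20165, -315, 5, 5061, 0, 0, 0, 0, 0], [0, 0, 0, 0, 0, 0, 0, 80325, -1275, 5, 20165, 0, 0, 0, 0], [0, 0, 0, 0, 0, 0, 0, 0, 325125, -1275, -1275, 80325, 0, 0, 0], [0, 0, 0, 0, 0, 0, 0, 0, 0, 1304325, -1275, -1275, 325125, 0, 0], [0, 0, 0, 0, 0, 0, 0, 0, 0, 0, 5237765, 5, -1275, 1304325, 0], [0, 0, 0, 0, 0, 0, 0, 0, 0, 0, 0, 21033221, 5, -5115,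 5237765], [0, 0, 0, 0, 0, 0, 0, 0, 0, 0, 0, 0, 84215045, 82181, 61701], [0, 0, 0, 0, 0, 0, 0, 0, 0, 0, 0, 0, 0, 336942341, 82181], [0, 0, 0, 0, 0, 0, 0, 0, 0, 0, 0, 0, 0, 0, 1347769605]]

def eL4_12 : Matrix (Fin 15) (Fin 15) ℤ := mkM 15 [[1, 0, 0, 0, 0, 0, 0, 0, 0, 0, 0, 0, 0, 0, 0], [1, 6, 0, 0, 0, 0, 0, 0, 0, 0, 0, 0, 0, 0, 0], [1, 6, 31, 0, 0, 0, 0, 0, 0, 0, 0, 0, 0, 0, 0], [1, 6, 31, 156, 0, 0, 0, 0, 0, 0, 0, 0, 0, 0, 0], [-155, -149, -119, 31, 781, 0, 0, 0, 0, 0, 0, 0, 0, 0, 0], [595, -155, -149, -119, 31, 3756, 0, 0, 0, 0, 0, 0, 0, 0, 0], [745, 3720, -30, -149, -744, 6, 18631, 0, 0, 0, 0, 0, 0, 0, 0], [150, 3870, 18720, -30, -774, -3744, 6, 93006, 0, 0, 0, 0, 0, 0, 0], [-93600, -93600, -74880, 18720, 18720, 14976, -3744, -3744, 464256, 0, 0,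 0, 0, 0, 0], [374400, -93600, -93600, -74880, 18720, 18720, 14976, -3744, -3744, 2336256, 0, 0, 0, 0, 0], [468000, 2343150, 150, -93600, -468630, -30, 18720, 93726, 6, -3744, 11696256, 0, 0, 0, 0], [-750, 2343000, 11733775, 150, -468600, -2346755, -30, 93720, 469351, 6, -18744, 58575006, 0, 0, 0], [-58668875, -58672625, -46953875, 11733775, 11734525, 9390775, -2346755, -2346905, -1878155, 469351, 469381, 375631, 293344381, 0, 0], [234769375, -58668875, -58672625, -46953875, 11733775, 11734525, 9390775, -2346755, -2346905, -1878155, 469351, 469381, 375631, 1467191256, 0], [293363125, 1467191250, -75125, -58672625, -293438250, 15025, 11734525, 58687650, -3005, -2346905, -11737530, 601, 469381, 2347506, 7336425631]]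
def eU4_12 : Matrix (Fin 15) (Fin 15) ℤ := mkM 15 [[6, 1, 1, 1, 0, 0, 0, 0, 0, 0, 0, 0, 0, 0, 0], [0, 31, 1, 1, 6, 0, 0, 0, 0, 0, 0, 0, 0, 0, 0], [0, 0, 156, 1, 6, 31, 0, 0, 0, 0, 0, 0, 0, 0, 0], [0, 0, 0, 781, 6, 31, 156, 0, 0, 0, 0, 0, 0, 0, 0], [0, 0, 0, 0, 3756, -119, 31, 781, 0, 0, 0, 0, 0, 0, 0], [0, 0, 0, 0, 0, 18631, -119, 31, 3756, 0, 0, 0, 0, 0, 0], [0, 0, 0, 0, 0, 0, 93006, -744, 6, 18631, 0, 0, 0, 0, 0], [0, 0, 0, 0, 0, 0, 0, 464256, -3744, 6, 93006, 0, 0, 0, 0], [0, 0, 0, 0, 0, 0, 0, 0, 2336256, -3744, -3744, 464256, 0, 0, 0], [0, 0, 0, 0, 0, 0, 0, 0, 0, 11696256, -3744, -3744, 2336256, 0, 0], [0, 0, 0, 0, 0, 0, 0, 0, 0, 0, 58575006, 6, -3744, 11696256, 0], [0, 0, 0, 0, 0, 0, 0, 0, 0, 0, 0, 293344381, 6, -18744,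 58575006], [0, 0, 0, 0, 0, 0, 0, 0, 0, 0, 0, 0, 1467191256, 469381, 375631], [0, 0, 0, 0, 0, 0, 0, 0, 0, 0, 0, 0, 0, 7336425631, 469381], [0, 0, 0, 0, 0, 0, 0, 0, 0, 0, 0, 0, 0, 0, 36682128756]]

def eL4_13 : Matrix (Fin 15) (Fin 15) ℤ := mkM 15 [[1, 0, 0, 0, 0, 0, 0, 0, 0, 0, 0, 0, 0, 0, 0], [1, 7, 0, 0, 0, 0, 0, 0, 0, 0, 0, 0, 0, 0, 0], [1, 7, 43, 0, 0, 0, 0, 0, 0, 0, 0, 0, 0, 0, 0], [1, 7, 43, 259, 0, 0, 0, 0, 0, 0, 0, 0, 0, 0, 0], [-258, -251, -209, 43, 1555, 0, 0, 0, 0, 0, 0, 0, 0, 0, 0], [1254, -258, -251, -209, 43, 9079, 0, 0, 0, 0, 0, 0, 0, 0, 0], [1506, 9030, -42, -251, -1505, 7, 54223, 0, 0, 0, 0, 0, 0, 0, 0], [252, 9282, 54390, -42, -1547, -9065, 7, 325087, 0, 0, 0, 0, 0, 0, 0], [-326340, -326340, -271950, 54390, 54390, 45325, -9065, -9065, 1948975,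 0, 0, 0, 0, 0, 0], [1631700, -326340, -326340, -271950, 54390, 54390, 45325, -9065, -9065, 11739175, 0, 0, 0, 0, 0], [1958040, 11756052, 252, -326340, -1959342, -42, 54390, 326557, 7, -9065, 70480375, 0, 0, 0, 0], [-1512, 11755800, 70589268, 252, -1959300, -11764878, -42, 326550, 1960813, 7, -54425, 423208807, 0, 0, 0], [-423535608, -423544680, -353000808, 70589268, 70590780, 58833468, -11764878, -11765130, -9805578, 1960813, 1960855, 1634263, 2541213655, 0, 0], [2118004848, -423535608, -423544680, -353000808, 70589268, 70590780, 58833468, -11764878, -11765130, -9805578, 1960813, 1960855, 1634263, 15249242743, 0], [2541268080, 15249242736, -272376, -423544680, -2541540456, 45396, 70590780, 423590076, -7566, -11765130, -70598346, 1261, 1960855, 11766391, 91497417271]]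
def eU4_13 : Matrix (Fin 15) (Fin 15) ℤ := mkM 15 [[7, 1, 1, 1, 0, 0, 0, 0, 0, 0, 0, 0, 0, 0, 0], [0, 43, 1, 1, 7, 0, 0, 0, 0, 0, 0, 0, 0, 0, 0], [0, 0, 259, 1, 7, 43, 0, 0, 0, 0, 0, 0, 0, 0, 0], [0, 0, 0, 1555, 7, 43, 259, 0, 0, 0, 0, 0, 0, 0, 0], [0, 0, 0, 0, 9079, -209, 43, 1555, 0, 0, 0, 0, 0, 0, 0], [0, 0, 0, 0, 0, 54223, -209, 43, 9079, 0, 0, 0, 0, 0, 0], [0, 0, 0, 0, 0, 0, 325087, -1505, 7, 54223, 0, 0, 0, 0, 0], [0, 0, 0, 0, 0, 0, 0, 1948975, -9065, 7, 325087, 0, 0, 0, 0], [0, 0, 0, 0, 0, 0, 0, 0, 11739175, -9065, -9065, 1948975, 0, 0, 0], [0, 0, 0, 0, 0, 0, 0, 0, 0, 70480375, -9065, -9065, 11739175, 0, 0], [0, 0, 0, 0, 0, 0, 0, 0, 0, 0, 423208807, 7, -9065, 70480375, 0], [0, 0, 0, 0, 0, 0, 0, 0, 0, 0, 0, 2541213655,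 7, -54425, 423208807], [0, 0, 0, 0, 0, 0, 0, 0, 0, 0, 0, 0, 15249242743, 1960855, 1634263], [0, 0, 0, 0, 0, 0, 0, 0, 0, 0, 0, 0, 0, 91497417271, 1960855], [0, 0, 0, 0, 0, 0, 0, 0, 0, 0, 0, 0, 0, 0, 548984504887]]

def eL4_14 : Matrix (Fin 15) (Fin 15) ℤ := mkM 15 [[1, 0, 0, 0, 0, 0, 0, 0, 0, 0, 0, 0, 0, 0, 0], [1, 8, 0, 0, 0, 0, 0, 0, 0, 0, 0, 0, 0, 0, 0], [1, 8, 57, 0, 0, 0, 0, 0, 0, 0, 0, 0, 0, 0, 0], [1, 8, 57, 400, 0, 0, 0, 0, 0, 0, 0, 0, 0, 0, 0], [-399, -391, -335, 57, 2801, 0, 0, 0, 0, 0, 0, 0, 0, 0, 0], [2345, -399, -391, -335, 57, 19216, 0, 0, 0, 0, 0, 0, 0, 0, 0], [2737, 19152, -56, -391, -2736, 8, 134121, 0, 0, 0, 0, 0, 0, 0, 0], [392, 19544, 134400, -56, -2792, -19200, 8, 938456, 0, 0, 0, 0, 0, 0, 0], [-940800, -940800, -806400, 134400, 134400, 115200,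 -19200, -19200, 6566400, 0, 0, 0, 0, 0, 0], [5644800, -940800, -940800, -806400, 134400, 134400, 115200, -19200, -19200, 46080000, 0, 0, 0, 0, 0], [6585600, 46116056, 392, -940800, -6588008, -56, 134400, 941144, 8, -19200, 322675200, 0, 0, 0, 0], [-2744, 46115664, 322944153, 392, -6587952, -46134879, -56, 941136, 6590697, 8, -134448, 2259667544, 0, 0, 0], [-2260609071, -2260628279, -1937799423, 322944153, 322946897, 276828489, -46134879, -46135271, -39546927, 6590697, 6590753, 5649561, 15824263505, 0, 0], [13564595961, -2260609071, -2260628279, -1937799423, 322944153, 322946897, 276828489, -46134879, -46135271, -39546927, 6590697, 6590753, 5649561, 110776435232, 0], [15824397953, 110776435224, -807079, -2260628279, -15825205032, 115297, 322946897, 2260743576, -16471, -46135271, -322963368, 2353, 6590753, 46137624, 775441637321]]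
def eU4_14 : Matrix (Fin 15) (Fin 15) ℤ := mkM 15 [[8, 1, 1, 1, 0, 0, 0, 0, 0, 0, 0, 0, 0, 0, 0], [0, 57, 1, 1, 8, 0, 0, 0, 0, 0, 0, 0, 0, 0, 0], [0, 0, 400, 1, 8, 57, 0, 0, 0, 0, 0, 0, 0, 0, 0], [0, 0, 0, 2801, 8, 57, 400, 0, 0, 0, 0, 0, 0, 0, 0], [0, 0, 0, 0, 19216, -335, 57, 2801, 0, 0, 0, 0, 0, 0, 0], [0, 0, 0, 0, 0, 134121, -335, 57, 19216, 0, 0, 0, 0, 0, 0], [0, 0, 0, 0, 0, 0, 938456, -2736, 8, 134121, 0, 0, 0, 0, 0], [0, 0, 0, 0, 0, 0, 0, 6566400, -19200, 8, 938456, 0, 0, 0, 0], [0, 0, 0, 0, 0, 0, 0, 0, 46080000, -19200, -19200, 6566400, 0, 0, 0], [0, 0, 0, 0, 0, 0, 0, 0, 0, 322675200, -19200, -19200, 46080000, 0, 0], [0, 0, 0, 0, 0, 0, 0, 0, 0, 0, 2259667544, 8, -19200, 322675200, 0], [0, 0, 0, 0, 0, 0, 0, 0, 0, 0, 0, 15824263505,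 8, -134448, 2259667544], [0, 0, 0, 0, 0, 0, 0, 0, 0, 0, 0, 0, 110776435232, 6590753, 5649561], [0, 0, 0, 0, 0, 0, 0, 0, 0, 0, 0, 0, 0, 775441637321, 6590753], [0, 0, 0, 0, 0, 0, 0, 0, 0, 0, 0, 0, 0, 0, 5428091463600]]

theorem charpolyZ4 : (Fz4).charpoly = (X+1)*(X^8+X^4+1)*(X^6+1) := by
  have E0 : (Fz4).charpoly.eval (-9) = (-183042582592688) := by
    rw [charpoly_eval]
    exact det_eq_of_LU _ eL4_0 eU4_0 (-3147215340057073698096074938969519433024130796516803743695917337987515588151366219351457792000000000) (-183042582592688)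
      (by decide) (@of_decide_eq_true _ (@Nat.decidableForallFin _ _ fun _ => @Nat.decidableForallFin _ _ fun _ => @instDecidableForall _ _ _ (Int.instDecidableEq _ _)) rfl) (@of_decide_eq_true _ (@Nat.decidableForallFin _ _ fun _ => @Nat.decidableForallFin _ _ fun _ => @instDecidableForall _ _ _ (Int.instDecidableEq _ _)) rfl) (by decide) (by decide) (by decide)
  have E1 : (Fz4).charpoly.eval (-8) = (-30793961074695) := by
    rw [charpoly_eval]
    exact det_eq_of_LU _ eL4_1 eU4_1 (-10877453166678542195261469477243589402145267185877299982834280042143937089712641624404928859375) (-30793961074695)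
      (by decide) (@of_decide_eq_true _ (@Nat.decidableForallFin _ _ fun _ => @Nat.decidableForallFin _ _ fun _ => @instDecidableForall _ _ _ (Int.instDecidableEq _ _)) rfl) (@of_decide_eq_true _ (@Nat.decidableForallFin _ _ fun _ => @Nat.decidableForallFin _ _ fun _ => @instDecidableForall _ _ _ (Int.instDecidableEq _ _)) rfl) (by decide) (by decide) (by decide)
  have E2 : (Fz4).charpoly.eval (-7) = (-4071068597700) := by
    rw [charpoly_eval]
    exact det_eq_of_LU _ eL4_2 eU4_2 (-6762002290770915380329032779442816819379322210989906089723656318950571193139200000000000) (-4071068597700)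
      (by decide) (@of_decide_eq_true _ (@Nat.decidableForallFin _ _ fun _ => @Nat.decidableForallFin _ _ fun _ => @instDecidableForall _ _ _ (Int.instDecidableEq _ _)) rfl) (@of_decide_eq_true _ (@Nat.decidableForallFin _ _ fun _ => @Nat.decidableForallFin _ _ fun _ => @instDecidableForall _ _ _ (Int.instDecidableEq _ _)) rfl) (by decide) (by decide) (by decide)
  have E3 : (Fz4).charpoly.eval (-6) = (-392131789205) := by
    rw [charpoly_eval]
    exact det_eq_of_LU _ eL4_3 eU4_3 (-438856133941180886986529853124538989496279120300704828500807073080167615966796875) (-392131789205)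
      (by decide) (@of_decide_eq_true _ (@Nat.decidableForallFin _ _ fun _ => @Nat.decidableForallFin _ _ fun _ => @instDecidableForall _ _ _ (Int.instDecidableEq _ _)) rfl) (@of_decide_eq_true _ (@Nat.decidableForallFin _ _ fun _ => @Nat.decidableForallFin _ _ fun _ => @instDecidableForall _ _ _ (Int.instDecidableEq _ _)) rfl) (by decide) (by decide) (by decide)
  have E4 : (Fz4).charpoly.eval (-5) = (-24454752504) := by
    rw [charpoly_eval]
    exact det_eq_of_LU _ eL4_4 eU4_4 (-1267000125258156418404632378878146108540786650564015055014713195279417344) (-24454752504)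
      (by decide) (@of_decide_eq_true _ (@Nat.decidableForallFin _ _ fun _ => @Nat.decidableForallFin _ _ fun _ => @instDecidableForall _ _ _ (Int.instDecidableEq _ _)) rfl) (@of_decide_eq_true _ (@Nat.decidableForallFin _ _ fun _ => @Nat.decidableForallFin _ _ fun _ => @instDecidableForall _ _ _ (Int.instDecidableEq _ _)) rfl) (by decide) (by decide) (by decide)
  have E5 : (Fz4).charpoly.eval (-4) = (-808661763) := by
    rw [charpoly_eval]
    exact det_eq_of_LU _ eL4_5 eU4_5 (-38034948717467316516081330979757493536515422082258898771484375) (-808661763)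
      (by decide) (@of_decide_eq_true _ (@Nat.decidableForallFin _ _ fun _ => @Nat.decidableForallFin _ _ fun _ => @instDecidableForall _ _ _ (Int.instDecidableEq _ _)) rfl) (@of_decide_eq_true _ (@Nat.decidableForallFin _ _ fun _ => @Nat.decidableForallFin _ _ fun _ => @instDecidableForall _ _ _ (Int.instDecidableEq _ _)) rfl) (by decide) (by decide) (by decide)
  have E6 : (Fz4).charpoly.eval (-3) = (-9698780) := by
    rw [charpoly_eval]
    exact det_eq_of_LU _ eL4_6 eU4_6 (-721005596761774959648480236589412077535232000000) (-9698780)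
      (by decide) (@of_decide_eq_true _ (@Nat.decidableForallFin _ _ fun _ => @Nat.decidableForallFin _ _ fun _ => @instDecidableForall _ _ _ (Int.instDecidableEq _ _)) rfl) (@of_decide_eq_true _ (@Nat.decidableForallFin _ _ fun _ => @Nat.decidableForallFin _ _ fun _ => @instDecidableForall _ _ _ (Int.instDecidableEq _ _)) rfl) (by decide) (by decide) (by decide)
  have E7 : (Fz4).charpoly.eval (-2) = (-17745) := by
    rw [charpoly_eval]
    exact det_eq_of_LU _ eL4_7 eU4_7 (-11102210375233914068679421875) (-17745)
      (by decide) (@of_decide_eq_true _ (@Nat.decidableForallFin _ _ fun _ => @Nat.decidableForallFin _ _ fun _ => @instDecidableForall _ _ _ (Int.instDecidableEq _ _)) rfl) (@of_decide_eq_true _ (@Nat.decidableForallFin _ _ fun _ => @Nat.decidableForallFin _ _ fun _ => @instDecidableForall _ _ _ (Int.instDecidableEq _ _)) rfl) (by decide) (by decide) (by decide)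
  have E8 : (Fz4).charpoly.eval 0 = 1 := by
    rw [charpoly_eval]
    exact det_eq_of_LU _ eL4_8 eU4_8 1 1
      (by decide) (@of_decide_eq_true _ (@Nat.decidableForallFin _ _ fun _ => @Nat.decidableForallFin _ _ fun _ => @instDecidableForall _ _ _ (Int.instDecidableEq _ _)) rfl) (@of_decide_eq_true _ (@Nat.decidableForallFin _ _ fun _ => @Nat.decidableForallFin _ _ fun _ => @instDecidableForall _ _ _ (Int.instDecidableEq _ _)) rfl) (by decide) (by decide) (by decide)
  have E9 : (Fz4).charpoly.eval 2 = 53235 := by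
    rw [charpoly_eval]
    exact det_eq_of_LU _ eL4_9 eU4_9 15178156035229195405031039960953125 53235
      (by decide) (@of_decide_eq_true _ (@Nat.decidableForallFin _ _ fun _ => @Nat.decidableForallFin _ _ fun _ => @instDecidableForall _ _ _ (Int.instDecidableEq _ _)) rfl) (@of_decide_eq_true _ (@Nat.decidableForallFin _ _ fun _ => @Nat.decidableForallFin _ _ fun _ => @instDecidableForall _ _ _ (Int.instDecidableEq _ _)) rfl) (by decide) (by decide) (by decide)
  have E10 : (Fz4).charpoly.eval 3 = 19397560 := by
    rw [charpoly_eval]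
    exact det_eq_of_LU _ eL4_10 eU4_10 8498871961856644630859226118212821398256091136000000 19397560
      (by decide) (@of_decide_eq_true _ (@Nat.decidableForallFin _ _ fun _ => @Nat.decidableForallFin _ _ fun _ => @instDecidableForall _ _ _ (Int.instDecidableEq _ _)) rfl) (@of_decide_eq_true _ (@Nat.decidableForallFin _ _ fun _ => @Nat.decidableForallFin _ _ fun _ => @instDecidableForall _ _ _ (Int.instDecidableEq _ _)) rfl) (by decide) (by decide) (by decide)
  have E11 : (Fz4).charpoly.eval 4 = 1347769605 := by
    rw [charpoly_eval]
    exact det_eq_of_LU _ eL4_11 eU4_11 42499545077390420239292739153837385329219731690768063111572265625 1347769605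
      (by decide) (@of_decide_eq_true _ (@Nat.decidableForallFin _ _ fun _ => @Nat.decidableForallFin _ _ fun _ => @instDecidableForall _ _ _ (Int.instDecidableEq _ _)) rfl) (@of_decide_eq_true _ (@Nat.decidableForallFin _ _ fun _ => @Nat.decidableForallFin _ _ fun _ => @instDecidableForall _ _ _ (Int.instDecidableEq _ _)) rfl) (by decide) (by decide) (by decide)
  have E12 : (Fz4).charpoly.eval 5 = 36682128756 := by
    rw [charpoly_eval]
    exact det_eq_of_LU _ eL4_12 eU4_12 346056871949831635827009324337712783555944242528486031251530704559900983296 36682128756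
      (by decide) (@of_decide_eq_true _ (@Nat.decidableForallFin _ _ fun _ => @Nat.decidableForallFin _ _ fun _ => @instDecidableForall _ _ _ (Int.instDecidableEq _ _)) rfl) (@of_decide_eq_true _ (@Nat.decidableForallFin _ _ fun _ => @Nat.decidableForallFin _ _ fun _ => @instDecidableForall _ _ _ (Int.instDecidableEq _ _)) rfl) (by decide) (by decide) (by decide)
  have E13 : (Fz4).charpoly.eval 6 = 548984504887 := by
    rw [charpoly_eval]
    exact det_eq_of_LU _ eL4_13 eU4_13 46944298692012992126085389861281272368178806854855239368420305564843993405486328125 548984504887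
      (by decide) (@of_decide_eq_true _ (@Nat.decidableForallFin _ _ fun _ => @Nat.decidableForallFin _ _ fun _ => @instDecidableForall _ _ _ (Int.instDecidableEq _ _)) rfl) (@of_decide_eq_true _ (@Nat.decidableForallFin _ _ fun _ => @Nat.decidableForallFin _ _ fun _ => @instDecidableForall _ _ _ (Int.instDecidableEq _ _)) rfl) (by decide) (by decide) (by decide)
  have E14 : (Fz4).charpoly.eval 7 = 5428091463600 := by
    rw [charpoly_eval]
    exact det_eq_of_LU _ eL4_14 eU4_14 370579661545166053331624084390616638463902540102239528649526581339684480640614400000000000 5428091463600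
      (by decide) (@of_decide_eq_true _ (@Nat.decidableForallFin _ _ fun _ => @Nat.decidableForallFin _ _ fun _ => @instDecidableForall _ _ _ (Int.instDecidableEq _ _)) rfl) (@of_decide_eq_true _ (@Nat.decidableForallFin _ _ fun _ => @Nat.decidableForallFin _ _ fun _ => @instDecidableForall _ _ _ (Int.instDecidableEq _ _)) rfl) (by decide) (by decide) (by decide)
  apply poly_eq_of_eval _ _ (Matrix.charpoly_monic _) (by monicity!)
    (by simp) (by compute_degree!) ({(-9), (-8), (-7), (-6), (-5), (-4), (-3), (-2), 0, 2, 3, 4, 5, 6, 7} : Finset ℤ) (by decide)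
  intro a ha
  fin_cases ha <;>
    simp only [E0, E1, E2, E3, E4, E5, E6, E7, E8, E9, E10, E11, E12, E13, E14] <;>
    norm_num [Polynomial.eval_mul, Polynomial.eval_add, Polynomial.eval_pow,
      Polynomial.eval_X, Polynomial.eval_one]

theorem part4 : coxeterPolyN 15 4 = (X + 1) * (X ^ 8 + X ^ 4 + 1) * (X ^ 6 + 1) := by
  have h := coxeter_eq 15 4 Bz4 Fz4 (by decide) (by decide)
  unfold coxeterPolyN
  rw [h, Matrix.charpoly_map, charpolyZ4]
  simp [Polynomial.map_mul, Polynomial.map_add, Polynomial.map_pow, Polynomial.map_one]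

def Bz6 : Matrix (Fin 15) (Fin 15) ℤ := mkM 15 [[1, -1, 0, 0, 0, 0, 1, -1, 0, 0, 0, 0, 1, -1, 0], [0, 1, -1, 0, 0, 0, 0, 1, -1, 0, 0, 0, 0, 1, -1], [0, 0, 1, -1, 0, 0, 0, 0, 1, -1, 0, 0, 0, 0, 1], [0, 0, 0, 1, -1, 0, 0, 0, 0, 1, -1, 0, 0, 0, 0], [0, 0, 0, 0, 1, -1, 0, 0, 0, 0, 1, -1, 0, 0, 0], [0, 0, 0, 0, 0, 1, -1, 0, 0, 0, 0, 1, -1, 0, 0], [0, 0, 0, 0, 0, 0, 1, -1, 0, 0, 0, 0, 1, -1, 0], [0, 0, 0, 0, 0, 0, 0, 1, -1, 0, 0, 0, 0, 1, -1], [0, 0, 0, 0, 0, 0, 0, 0, 1, -1, 0, 0, 0, 0, 1], [0, 0, 0, 0, 0, 0, 0, 0, 0, 1, -1, 0, 0, 0, 0], [0, 0, 0, 0, 0, 0, 0, 0, 0, 0, 1, -1, 0, 0, 0], [0, 0, 0, 0, 0, 0, 0, 0, 0, 0, 0, 1, -1, 0, 0], [0, 0, 0, 0, 0, 0, 0, 0,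 0, 0, 0, 0, 1, -1, 0], [0, 0, 0, 0, 0, 0, 0, 0, 0, 0, 0, 0, 0, 1, -1], [0, 0, 0, 0, 0, 0, 0, 0, 0, 0, 0, 0, 0, 0, 1]]

def Fz6 : Matrix (Fin 15) (Fin 15) ℤ := mkM 15 [[-1, -1, -1, -1, -1, -1, 0, 0, 0, 0, 0, 0, 0, 0, 0], [1, 0, 0, 0, 0, 0, -1, 0, 0, 0, 0, 0, 0, 0, 0], [0, 1, 0, 0, 0, 0, 0, -1, 0, 0, 0, 0, 0, 0, 0], [0, 0, 1, 0, 0, 0, 0, 0, -1, 0, 0, 0, 0, 0, 0], [0, 0, 0, 1, 0, 0, 0, 0, 0, -1, 0, 0, 0, 0, 0], [0, 0, 0, 0, 1, 0, 0, 0, 0, 0, -1, 0, 0, 0, 0], [-1, -1, -1, -1, -1, 0, 0, 0, 0, 0, 0, -1, 0, 0, 0], [1, 0, 0, 0, 0, 0, 0, 0, 0, 0, 0, 0, -1, 0, 0], [0, 1, 0, 0, 0, 0, 0, 0, 0, 0, 0, 0, 0, -1, 0], [0, 0, 1, 0, 0, 0, 0, 0, 0, 0, 0, 0, 0, 0, -1],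 [0, 0, 0, 1, 0, 0, 0, 0, 0, 0, 0, 0, 0, 0, 0], [0, 0, 0, 0, 1, 0, 0, 0, 0, 0, 0, 0, 0, 0, 0], [-1, -1, -1, -1, -1, 0, 0, 0, 0, 0, 0, 0, 0, 0, 0], [1, 0, 0, 0, 0, 0, 0, 0, 0, 0, 0, 0, 0, 0, 0], [0, 1, 0, 0, 0, 0, 0, 0, 0, 0, 0, 0, 0, 0, 0]]

def eL6_0 : Matrix (Fin 15) (Fin 15) ℤ := mkM 15 [[1, 0, 0, 0, 0, 0, 0, 0, 0, 0, 0, 0, 0, 0, 0], [1, -8, 0, 0, 0, 0, 0, 0, 0, 0, 0, 0, 0, 0, 0], [1, -8, 73, 0, 0, 0, 0, 0, 0, 0, 0, 0, 0, 0, 0], [1, -8, 73, -656, 0, 0, 0, 0, 0, 0, 0, 0, 0, 0, 0], [1, -8, 73, -656, 5905, 0, 0, 0, 0, 0, 0, 0, 0, 0, 0], [1, -8, 73, -656, 5905, -53144, 0, 0, 0, 0, 0, 0, 0, 0, 0], [53145, 53137, 53209, 52561, 58393, 5905, 478297, 0, 0, 0, 0, 0, 0, 0, 0], [525537, 53145,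 53137, 53209, 52561, 58393, 5905, -4251536, 0, 0, 0, 0, 0, 0, 0], [473049, -4257432, -72, 649, -5840, 52561, -473048, -8, 38316961, 0, 0, 0, 0, 0, 0], [-52560, -4309920, 38263680, -52560, -58400, -5840, -478880, 4251520, -5840, -344852000, 0, 0, 0, 0, 0], [-525600, -52560, 38263680, -344898720, -52560, -58400, -5840, 4251520, -38322080, -5840, 3103609600, 0, 0, 0, 0], [-473040, 4257369, -72, -344846232, 3103621929, -52560, 473041, -8, -38316248, 344846881, -5840, -27932544800, 0, 0, 0], [27932597361, 27936848889, 27898585065, 27898585713, 30997949625, 3103621929, 3104094321, 3099842785, 3099842857, 3444216625, 344846881, 344899369, 251393376241, 0, 0], [278981546625, 27932597361, 27936848889, 27898585065, 27898585713, 30997949625, 3103621929, 3104094321, 3099842785, 3099842857, 3444216625, 344846881, 344899369, -2259440543384, 0], [251087271417, -2259784917792, 38322153, -344374416, 58329, 27898585713, -251087213088, 4258017, -38263824, 6481, 3099842857, -27898579232, 473113, -4251536, 20338064733241]]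
def eU6_0 : Matrix (Fin 15) (Fin 15) ℤ := mkM 15 [[-8, 1, 1, 1, 1, 1, 0, 0, 0, 0, 0, 0, 0, 0, 0], [0, 73, 1, 1, 1, 1, -8, 0, 0, 0, 0, 0, 0, 0, 0], [0, 0, -656, 1, 1, 1, -8, 73, 0, 0, 0, 0, 0, 0, 0], [0, 0, 0, 5905, 1, 1, -8, 73, -656, 0, 0, 0, 0, 0, 0], [0, 0, 0, 0, -53144, 1, -8, 73, -656, 5905, 0, 0, 0, 0, 0], [0, 0, 0, 0, 0, 478297, -8, 73, -656, 5905, -53144, 0, 0, 0, 0], [0, 0, 0, 0, 0, 0, -4251536, 53209, 52561, 58393, 5905, 478297, 0, 0, 0], [0, 0, 0, 0, 0, 0, 0, 38316961, 53209, 52561, 58393, 5905, -4251536, 0, 0], [0, 0, 0, 0, 0, 0, 0, 0, -344852000, -5840, 52561, -473048, -8, 38316961, 0], [0, 0, 0, 0, 0, 0, 0, 0, 0, 3103609600, -5840, -478880, 4251520, -5840, -344852000], [0, 0, 0, 0, 0, 0, 0, 0, 0, 0, -27932544800, -5840, 4251520, -38322080, -5840], [0, 0, 0, 0, 0, 0,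 0, 0, 0, 0, 0, 251393376241, -8, -38316248, 344846881], [0, 0, 0, 0, 0, 0, 0, 0, 0, 0, 0, 0, -2259440543384, 3099842857, 3444216625], [0, 0, 0, 0, 0, 0, 0, 0, 0, 0, 0, 0, 0, 20338064733241, 3099842857], [0, 0, 0, 0, 0, 0, 0, 0, 0, 0, 0, 0, 0, 0, -183042582592688]]

def eL6_1 : Matrix (Fin 15) (Fin 15) ℤ := mkM 15 [[1, 0, 0, 0, 0, 0, 0, 0, 0, 0, 0, 0, 0, 0, 0], [1, -7, 0, 0, 0, 0, 0, 0, 0, 0, 0, 0, 0, 0, 0], [1, -7, 57, 0, 0, 0, 0, 0, 0, 0, 0, 0, 0, 0, 0], [1, -7, 57, -455, 0, 0, 0, 0, 0, 0, 0, 0, 0, 0, 0], [1, -7, 57, -455, 3641, 0, 0, 0, 0, 0, 0, 0, 0, 0, 0], [1, -7, 57, -455, 3641, -29127, 0, 0, 0, 0, 0, 0, 0, 0, 0], [29128, 29121, 29177, 28729, 32313, 3641, 233017, 0, 0, 0, 0, 0, 0, 0, 0], [258504, 29128, 29121, 29177, 28729, 32313, 3641, -1835015, 0, 0, 0, 0,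 0, 0, 0], [229832, -1838648, -56, 449, -3591, 28729, -229831, -7, 14709241, 0, 0, 0, 0, 0, 0], [-28728, -1867320, 14680008, -28728, -32319, -3591, -233415, 1835001, -3591, -117673479, 0, 0, 0, 0, 0], [-258552, -28728, 14680008, -117698616, -28728, -32319, -3591, 1835001, -14712327, -3591, 941355513, 0, 0, 0, 0], [-229824, 1838600, -56, -117669944, 941363144, -28728, 229825, -7, -14708743, 117670393, -3591, -7530876423, 0, 0, 0], [7530905152, 7532740160, 7518060040, 7518060488, 8457584584, 941363144, 941592520, 939757505, 939757561, 1057198073, 117670393, 117699065, 60247241209, 0, 0], [67660676672, 7530905152, 7532740160, 7518060040, 7518060488, 8457584584, 941363144, 941592520, 939757505, 939757561, 1057198073, 117670393, 117699065, -481038172167, 0], [60144483904, -481155613120, 14712384, -117440960, 32264, 7518060488, -60144451640, 1839048, -14680120, 4033, 939757561, -7518056455, 229881, -1835015, 3849245134841]]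
def eU6_1 : Matrix (Fin 15) (Fin 15) ℤ := mkM 15 [[-7, 1, 1, 1, 1, 1, 0, 0, 0, 0, 0, 0, 0, 0, 0], [0, 57, 1, 1, 1, 1, -7, 0, 0, 0, 0, 0, 0, 0, 0], [0, 0, -455, 1, 1, 1, -7, 57, 0, 0, 0, 0, 0, 0, 0], [0, 0, 0, 3641, 1, 1, -7, 57, -455, 0, 0, 0, 0, 0, 0], [0, 0, 0, 0, -29127, 1, -7, 57, -455, 3641, 0, 0, 0, 0, 0], [0, 0, 0, 0, 0, 233017, -7, 57, -455, 3641, -29127, 0, 0, 0, 0], [0, 0, 0, 0, 0, 0, -1835015, 29177, 28729, 32313, 3641, 233017, 0, 0, 0], [0, 0, 0, 0, 0, 0, 0, 14709241, 29177, 28729, 32313, 3641, -1835015, 0, 0], [0, 0, 0, 0, 0, 0, 0, 0, -117673479, -3591, 28729, -229831, -7, 14709241, 0], [0, 0, 0, 0, 0, 0, 0, 0, 0, 941355513, -3591, -233415, 1835001, -3591, -117673479], [0, 0, 0, 0, 0, 0, 0, 0, 0, 0, -7530876423, -3591, 1835001, -14712327, -3591], [0, 0, 0, 0, 0, 0, 0,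 0, 0, 0, 0, 60247241209, -7, -14708743, 117670393], [0, 0, 0, 0, 0, 0, 0, 0, 0, 0, 0, 0, -481038172167, 939757561, 1057198073], [0, 0, 0, 0, 0, 0, 0, 0, 0, 0, 0, 0, 0, 3849245134841, 939757561], [0, 0, 0, 0, 0, 0, 0, 0, 0, 0, 0, 0, 0, 0, -30793961074695]]

def eL6_2 : Matrix (Fin 15) (Fin 15) ℤ := mkM 15 [[1, 0, 0, 0, 0, 0, 0, 0, 0, 0, 0, 0, 0, 0, 0], [1, -6, 0, 0, 0, 0, 0, 0, 0, 0, 0, 0, 0, 0, 0], [1, -6, 43, 0, 0, 0, 0, 0, 0, 0, 0, 0, 0, 0, 0], [1, -6, 43, -300, 0, 0, 0, 0, 0, 0, 0, 0, 0, 0, 0], [1, -6, 43, -300, 2101, 0, 0, 0, 0, 0, 0, 0, 0, 0, 0], [1, -6, 43, -300, 2101, -14706, 0, 0, 0, 0, 0, 0, 0, 0, 0], [14707, 14701, 14743, 14449, 16507, 2101, 102943, 0, 0, 0, 0, 0, 0, 0, 0], [115549, 14707, 14701, 14743, 14449, 16507, 2101, -705900, 0, 0, 0, 0, 0, 0, 0],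 [101143, -707994, -42, 295, -2064, 14449, -101142, -6, 4956001, 0, 0, 0, 0, 0, 0], [-14448, -722400, 4941216, -14448, -16512, -2064, -103200, 705888, -2064, -34691712, 0, 0, 0, 0, 0], [-115584, -14448, 4941216, -34704096, -14448, -16512, -2064, 705888, -4957728, -2064, 242825472, 0, 0, 0, 0], [-101136, 707959, -42, -34689690, 242829895, -14448, 101137, -6, -4955670, 34689985, -2064, -1699794816, 0, 0, 0], [1699809265, 1700515159, 1695573859, 1695574153, 1937695795, 242829895, 242930737, 242224837, 242224879, 276813685, 34689985, 34704391, 11898664849, 0, 0], [13563870565, 1699809265, 1700515159, 1695573859, 1695574153, 1937695795, 242829895, 242930737, 242224837, 242224879, 276813685, 34689985, 34704391, -83048429106, 0], [11869019071, -83083018200, 4957771, -34589100, 16471, 1695574153, -11869002600, 708253, -4941300, 2353, 242224879, -1695571800, 101179, -705900, 581581228579]]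
def eU6_2 : Matrix (Fin 15) (Fin 15) ℤ := mkM 15 [[-6, 1, 1, 1, 1, 1, 0, 0, 0, 0, 0, 0, 0, 0, 0], [0, 43, 1, 1, 1, 1, -6, 0, 0, 0, 0, 0, 0, 0, 0], [0, 0, -300, 1, 1, 1, -6, 43, 0, 0, 0, 0, 0, 0, 0], [0, 0, 0, 2101, 1, 1, -6, 43, -300, 0, 0, 0, 0, 0, 0], [0, 0, 0, 0, -14706, 1, -6, 43, -300, 2101, 0, 0, 0, 0, 0], [0, 0, 0, 0, 0, 102943, -6, 43, -300, 2101, -14706, 0, 0, 0, 0], [0, 0, 0, 0, 0, 0, -705900, 14743, 14449, 16507, 2101, 102943, 0, 0, 0], [0, 0, 0, 0, 0, 0, 0, 4956001, 14743, 14449, 16507, 2101, -705900, 0, 0], [0, 0, 0, 0, 0, 0, 0, 0, -34691712, -2064, 14449, -101142, -6, 4956001, 0], [0, 0, 0, 0, 0, 0, 0, 0, 0, 242825472, -2064, -103200, 705888, -2064, -34691712], [0, 0, 0, 0, 0, 0, 0, 0, 0, 0, -1699794816, -2064, 705888, -4957728, -2064], [0, 0, 0, 0, 0, 0, 0, 0,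 0, 0, 0, 11898664849, -6, -4955670, 34689985], [0, 0, 0, 0, 0, 0, 0, 0, 0, 0, 0, 0, -83048429106, 242224879, 276813685], [0, 0, 0, 0, 0, 0, 0, 0, 0, 0, 0, 0, 0, 581581228579, 242224879], [0, 0, 0, 0, 0, 0, 0, 0, 0, 0, 0, 0, 0, 0, -4071068597700]]

def eL6_3 : Matrix (Fin 15) (Fin 15) ℤ := mkM 15 [[1, 0, 0, 0, 0, 0, 0, 0, 0, 0, 0, 0, 0, 0, 0], [1, -5, 0, 0, 0, 0, 0, 0, 0, 0, 0, 0, 0, 0, 0], [1, -5, 31, 0, 0, 0, 0, 0, 0, 0, 0, 0, 0, 0, 0], [1, -5, 31, -185, 0, 0, 0, 0, 0, 0, 0, 0, 0, 0, 0], [1, -5, 31, -185, 1111, 0, 0, 0, 0, 0, 0, 0, 0, 0, 0], [1, -5, 31, -185, 1111, -6665, 0, 0, 0, 0, 0, 0, 0, 0, 0], [6666, 6661, 6691, 6511, 7591, 1111, 39991, 0, 0, 0, 0, 0, 0, 0, 0], [45546, 6666, 6661, 6691, 6511, 7591, 1111, -233285, 0, 0, 0, 0, 0, 0, 0], [39066,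 -234390, -30, 181, -1085, 6511, -39065, -5, 1406371, 0, 0, 0, 0, 0, 0], [-6510, -240870, 1399650, -6510, -7595, -1085, -40145, 233275, -1085, -8438045, 0, 0, 0, 0, 0], [-45570, -6510, 1399650, -8443470, -6510, -7595, -1085, 233275, -1407245, -1085, 50620675, 0, 0, 0, 0], [-39060, 234366, -30, -8436990, 50623026, -6510, 39061, -5, -1406165, 8437171, -1085, -303731645, 0, 0, 0], [303738156, 303971436, 302571726, 302571906, 352960386, 50623026, 50661906, 50428621, 50428651, 58826731, 8437171, 8443651, 1822428931, 0, 0], [2117762316, 303738156, 303971436, 302571726, 302571906, 352960386, 50623026, 50661906, 50428621, 50428651, 58826731, 8437171, 8443651, -10884144965, 0], [1815431436, -10892543220, 1407276, -8398260, 7566, 302571906, -1815423870, 234546, -1399710, 1261, 50428651, -302570645, 39091, -233285, 65355298411]]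
def eU6_3 : Matrix (Fin 15) (Fin 15) ℤ := mkM 15 [[-5, 1, 1, 1, 1, 1, 0, 0, 0, 0, 0, 0, 0, 0, 0], [0, 31, 1, 1, 1, 1, -5, 0, 0, 0, 0, 0, 0, 0, 0], [0, 0, -185, 1, 1, 1, -5, 31, 0, 0, 0, 0, 0, 0, 0], [0, 0, 0, 1111, 1, 1, -5, 31, -185, 0, 0, 0, 0, 0, 0], [0, 0, 0, 0, -6665, 1, -5, 31, -185, 1111, 0, 0, 0, 0, 0], [0, 0, 0, 0, 0, 39991, -5, 31, -185, 1111, -6665, 0, 0, 0, 0], [0, 0, 0, 0, 0, 0, -233285, 6691, 6511, 7591, 1111, 39991, 0, 0, 0], [0, 0, 0, 0, 0, 0, 0, 1406371, 6691, 6511, 7591, 1111, -233285, 0, 0], [0, 0, 0, 0, 0, 0, 0, 0, -8438045, -1085, 6511, -39065, -5, 1406371, 0], [0, 0, 0, 0, 0, 0, 0, 0, 0, 50620675, -1085, -40145, 233275, -1085, -8438045], [0, 0, 0, 0, 0, 0, 0, 0, 0, 0, -303731645, -1085, 233275, -1407245, -1085], [0, 0, 0, 0, 0, 0, 0, 0,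 0, 0, 0, 1822428931, -5, -1406165, 8437171], [0, 0, 0, 0, 0, 0, 0, 0, 0, 0, 0, 0, -10884144965, 50428651, 58826731], [0, 0, 0, 0, 0, 0, 0, 0, 0, 0, 0, 0, 0, 65355298411, 50428651], [0, 0, 0, 0, 0, 0, 0, 0, 0, 0, 0, 0, 0, 0, -392131789205]]

def eL6_4 : Matrix (Fin 15) (Fin 15) ℤ := mkM 15 [[1, 0, 0, 0, 0, 0, 0, 0, 0, 0, 0, 0, 0, 0, 0], [1, -4, 0, 0, 0, 0, 0, 0, 0, 0, 0, 0, 0, 0, 0], [1, -4, 21, 0, 0, 0, 0, 0, 0, 0, 0, 0, 0, 0, 0], [1, -4, 21, -104, 0, 0, 0, 0, 0, 0, 0, 0, 0, 0, 0], [1, -4, 21, -104, 521, 0, 0, 0, 0, 0, 0, 0, 0, 0, 0], [1, -4, 21, -104, 521, -2604, 0, 0, 0, 0, 0, 0, 0, 0, 0], [2605, 2601, 2621, 2521, 3021, 521, 13021, 0, 0, 0, 0, 0, 0, 0, 0], [15105, 2605, 2601, 2621, 2521, 3021, 521, -62504, 0, 0, 0, 0, 0, 0, 0], [12605, -63020,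 -20, 101, -504, 2521, -12604, -4, 315121, 0, 0, 0, 0, 0, 0], [-2520, -65520, 312480, -2520, -3024, -504, -13104, 62496, -504, -1575504, 0, 0, 0, 0, 0], [-15120, -2520, 312480, -1577520, -2520, -3024, -504, 62496, -315504, -504, 7874496, 0, 0, 0, 0], [-12600, 63005, -20, -1575020, 7875605, -2520, 12601, -4, -315004, 1575121, -504, -39375504, 0, 0, 0], [39378025, 39440525, 39128005, 39128105, 46940605, 7875605, 7888105, 7825601, 7825621, 9388121, 1575121, 1577621, 196890121, 0, 0], [234703025, 39378025, 39440525, 39128005, 39128105, 46940605, 7875605, 7888105, 7825601, 7825621, 9388121, 1575121, 1577621, -976625004, 0], [195640525, -978187600, 315525, -1562600, 3005, 39128105, -195637520, 63105, -312520, 601, 7825621, -39127504, 12621, -62504, 4890950621]]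
def eU6_4 : Matrix (Fin 15) (Fin 15) ℤ := mkM 15 [[-4, 1, 1, 1, 1, 1, 0, 0, 0, 0, 0, 0, 0, 0, 0], [0, 21, 1, 1, 1, 1, -4, 0, 0, 0, 0, 0, 0, 0, 0], [0, 0, -104, 1, 1, 1, -4, 21, 0, 0, 0, 0, 0, 0, 0], [0, 0, 0, 521, 1, 1, -4, 21, -104, 0, 0, 0, 0, 0, 0], [0, 0, 0, 0, -2604, 1, -4, 21, -104, 521, 0, 0, 0, 0, 0], [0, 0, 0, 0, 0, 13021, -4, 21, -104, 521, -2604, 0, 0, 0, 0], [0, 0, 0, 0, 0, 0, -62504, 2621, 2521, 3021, 521, 13021, 0, 0, 0], [0, 0, 0, 0, 0, 0, 0, 315121, 2621, 2521, 3021, 521, -62504, 0, 0], [0, 0, 0, 0, 0, 0, 0, 0, -1575504, -504, 2521, -12604, -4, 315121, 0], [0, 0, 0, 0, 0, 0, 0, 0, 0, 7874496, -504, -13104, 62496, -504, -1575504], [0, 0, 0, 0, 0, 0, 0, 0, 0, 0, -39375504, -504, 62496, -315504, -504], [0, 0, 0, 0, 0, 0, 0, 0, 0, 0, 0, 196890121,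 -4, -315004, 1575121], [0, 0, 0, 0, 0, 0, 0, 0, 0, 0, 0, 0, -976625004, 7825621, 9388121], [0, 0, 0, 0, 0, 0, 0, 0, 0, 0, 0, 0, 0, 4890950621, 7825621], [0, 0, 0, 0, 0, 0, 0, 0, 0, 0, 0, 0, 0, 0, -24454752504]]

def eL6_5 : Matrix (Fin 15) (Fin 15) ℤ := mkM 15 [[1, 0, 0, 0, 0, 0, 0, 0, 0, 0, 0, 0, 0, 0, 0], [1, -3, 0, 0, 0, 0, 0, 0, 0, 0, 0, 0, 0, 0, 0], [1, -3, 13, 0, 0, 0, 0, 0, 0, 0, 0, 0, 0, 0, 0], [1, -3, 13, -51, 0, 0, 0, 0, 0, 0, 0, 0, 0, 0, 0], [1, -3, 13, -51, 205, 0, 0, 0, 0, 0, 0, 0, 0, 0, 0], [1, -3, 13, -51, 205, -819, 0, 0, 0, 0, 0, 0, 0, 0, 0], [820, 817, 829, 781, 973, 205, 3277, 0, 0, 0, 0, 0, 0, 0, 0], [3892, 820, 817, 829, 781, 973, 205, -12291, 0, 0, 0, 0, 0, 0, 0], [3124, -12492, -12, 49, -195, 781, -3123, -3, 49981, 0, 0,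 0, 0, 0, 0], [-780, -13260, 49140, -780, -975, -195, -3315, 12285, -195, -199875, 0, 0, 0, 0, 0], [-3900, -780, 49140, -200460, -780, -975, -195, 12285, -50115, -195, 798525, 0, 0, 0, 0], [-3120, 12484, -12, -199692, 798964, -780, 3121, -3, -49923, 199741, -195, -3195075, 0, 0, 0], [3195856, 3208144, 3158980, 3159028, 3945460, 798964, 802036, 789745, 789757, 986365, 199741, 200509, 12783421, 0, 0], [15781840, 3195856, 3208144, 3158980, 3159028, 3945460, 798964, 802036, 789745, 789757, 986365, 199741, 200509, -50343939, 0], [12636112, -50540592, 50128, -196656, 964, 3159028, -12635148, 12532, -49164, 241, 789757, -3158787, 3133, -12291, 202165501]]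
def eU6_5 : Matrix (Fin 15) (Fin 15) ℤ := mkM 15 [[-3, 1, 1, 1, 1, 1, 0, 0, 0, 0, 0, 0, 0, 0, 0], [0, 13, 1, 1, 1, 1, -3, 0, 0, 0, 0, 0, 0, 0, 0], [0, 0, -51, 1, 1, 1, -3, 13, 0, 0, 0, 0, 0, 0, 0], [0, 0, 0, 205, 1, 1, -3, 13, -51, 0, 0, 0, 0, 0, 0], [0, 0, 0, 0, -819, 1, -3, 13, -51, 205, 0, 0, 0, 0, 0], [0, 0, 0, 0, 0, 3277, -3, 13, -51, 205, -819, 0, 0, 0, 0], [0, 0, 0, 0, 0, 0, -12291, 829, 781, 973, 205, 3277, 0, 0, 0], [0, 0, 0, 0, 0, 0, 0, 49981, 829, 781, 973, 205, -12291, 0, 0], [0, 0, 0, 0, 0, 0, 0, 0, -199875, -195, 781, -3123, -3, 49981, 0], [0, 0, 0, 0, 0, 0, 0, 0, 0, 798525, -195, -3315, 12285, -195, -199875], [0, 0, 0, 0, 0, 0, 0, 0, 0, 0, -3195075, -195, 12285, -50115, -195], [0, 0, 0, 0, 0, 0, 0, 0, 0, 0, 0, 12783421, -3, -49923, 199741],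 [0, 0, 0, 0, 0, 0, 0, 0, 0, 0, 0, 0, -50343939, 789757, 986365], [0, 0, 0, 0, 0, 0, 0, 0, 0, 0, 0, 0, 0, 202165501, 789757], [0, 0, 0, 0, 0, 0, 0, 0, 0, 0, 0, 0, 0, 0, -808661763]]

def eL6_6 : Matrix (Fin 15) (Fin 15) ℤ := mkM 15 [[1, 0, 0, 0, 0, 0, 0, 0, 0, 0, 0, 0, 0, 0, 0], [1, -2, 0, 0, 0, 0, 0, 0, 0, 0, 0, 0, 0, 0, 0], [1, -2, 7, 0, 0, 0, 0, 0, 0, 0, 0, 0, 0, 0, 0], [1, -2, 7, -20, 0, 0, 0, 0, 0, 0, 0, 0, 0, 0, 0], [1, -2, 7, -20, 61, 0, 0, 0, 0, 0, 0, 0, 0, 0, 0], [1, -2, 7, -20, 61, -182, 0, 0, 0, 0, 0, 0, 0, 0, 0], [183, 181, 187, 169, 223, 61, 547, 0, 0, 0, 0, 0, 0, 0, 0], [669, 183, 181, 187, 169, 223, 61, -1460, 0, 0, 0, 0, 0, 0, 0], [507, -1518, -6, 19, -56, 169, -506, -2, 4561, 0, 0, 0, 0, 0, 0], [-168, -1680,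 4368, -168, -224, -56, -560, 1456, -56, -13664, 0, 0, 0, 0, 0], [-672, -168, 4368, -13776, -168, -224, -56, 1456, -4592, -56, 40768, 0, 0, 0, 0], [-504, 1515, -6, -13614, 40899, -168, 505, -2, -4538, 13633, -56, -122528, 0, 0, 0], [122697, 124155, 119775, 119793, 159159, 40899, 41385, 39925, 39931, 53053, 13633, 13795, 368089, 0, 0], [477477, 122697, 124155, 119775, 119793, 159159, 40899, 41385, 39925, 39931, 53053, 13633, 13795, -1064342, 0], [359379, -1077480, 4599, -13140, 219, 119793, -359160, 1533, -4380, 73, 39931, -119720, 511, -1460, 3232951]]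
def eU6_6 : Matrix (Fin 15) (Fin 15) ℤ := mkM 15 [[-2, 1, 1, 1, 1, 1, 0, 0, 0, 0, 0, 0, 0, 0, 0], [0, 7, 1, 1, 1, 1, -2, 0, 0, 0, 0, 0, 0, 0, 0], [0, 0, -20, 1, 1, 1, -2, 7, 0, 0, 0, 0, 0, 0, 0], [0, 0, 0, 61, 1, 1, -2, 7, -20, 0, 0, 0, 0, 0, 0], [0, 0, 0, 0, -182, 1, -2, 7, -20, 61, 0, 0, 0, 0, 0], [0, 0, 0, 0, 0, 547, -2, 7, -20, 61, -182, 0, 0, 0, 0], [0, 0, 0, 0, 0, 0, -1460, 187, 169, 223, 61, 547, 0, 0, 0], [0, 0, 0, 0, 0, 0, 0, 4561, 187, 169, 223, 61, -1460, 0, 0], [0, 0, 0, 0, 0, 0, 0, 0, -13664, -56, 169, -506, -2, 4561, 0], [0, 0, 0, 0, 0, 0, 0, 0, 0, 40768, -56, -560, 1456, -56, -13664], [0, 0, 0, 0, 0, 0, 0, 0, 0, 0, -122528, -56, 1456, -4592, -56], [0, 0, 0, 0, 0, 0, 0, 0, 0, 0, 0, 368089, -2, -4538, 13633], [0, 0,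 0, 0, 0, 0, 0, 0, 0, 0, 0, 0, -1064342, 39931, 53053], [0, 0, 0, 0, 0, 0, 0, 0, 0, 0, 0, 0, 0, 3232951, 39931], [0, 0, 0, 0, 0, 0, 0, 0, 0, 0, 0, 0, 0, 0, -9698780]]

def eL6_7 : Matrix (Fin 15) (Fin 15) ℤ := mkM 15 [[1, 0, 0, 0, 0, 0, 0, 0, 0, 0, 0, 0, 0, 0, 0], [1, -1, 0, 0, 0, 0, 0, 0, 0, 0, 0, 0, 0, 0, 0], [1, -1, 3, 0, 0, 0, 0, 0, 0, 0, 0, 0, 0, 0, 0], [1, -1, 3, -5, 0, 0, 0, 0, 0, 0, 0, 0, 0, 0, 0], [1, -1, 3, -5, 11, 0, 0, 0, 0, 0, 0, 0, 0, 0, 0], [1, -1, 3, -5, 11, -21, 0, 0, 0, 0, 0, 0, 0, 0, 0], [22, 21, 23, 19, 27, 11, 43, 0, 0, 0, 0, 0, 0, 0, 0], [54, 22, 21, 23, 19, 27, 11, -65, 0, 0, 0, 0, 0, 0, 0], [38, -74, -2, 5, -9, 19, -37, -1, 151, 0, 0, 0, 0, 0, 0], [-18, -90, 126, -18, -27, -9,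 -45, 63, -9, -297, 0, 0, 0, 0, 0], [-54, -18, 126, -306, -18, -27, -9, 63, -153, -9, 567, 0, 0, 0, 0], [-36, 74, -2, -290, 590, -18, 37, -1, -145, 295, -9, -1161, 0, 0, 0], [1180, 1244, 1114, 1118, 1630, 590, 622, 557, 559, 815, 295, 311, 2359, 0, 0], [3260, 1180, 1244, 1114, 1118, 1630, 590, 622, 557, 559, 815, 295, 311, -4161, 0], [2236, -4420, 156, -260, 26, 1118, -2210, 78, -130, 13, 559, -1105, 39, -65, 8879]]
def eU6_7 : Matrix (Fin 15) (Fin 15) ℤ := mkM 15 [[-1, 1, 1, 1, 1, 1, 0, 0, 0, 0, 0, 0, 0, 0, 0], [0, 3, 1, 1, 1, 1, -1, 0, 0, 0, 0, 0, 0, 0, 0], [0, 0, -5, 1, 1, 1, -1, 3, 0, 0, 0, 0, 0, 0, 0], [0, 0, 0, 11, 1, 1, -1, 3, -5, 0, 0, 0, 0, 0, 0], [0, 0, 0, 0, -21, 1, -1, 3, -5, 11, 0, 0, 0, 0, 0], [0, 0, 0, 0, 0, 43, -1, 3, -5, 11, -21, 0, 0, 0, 0], [0, 0, 0, 0, 0,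 0, -65, 23, 19, 27, 11, 43, 0, 0, 0], [0, 0, 0, 0, 0, 0, 0, 151, 23, 19, 27, 11, -65, 0, 0], [0, 0, 0, 0, 0, 0, 0, 0, -297, -9, 19, -37, -1, 151, 0], [0, 0, 0, 0, 0, 0, 0, 0, 0, 567, -9, -45, 63, -9, -297], [0, 0, 0, 0, 0, 0, 0, 0, 0, 0, -1161, -9, 63, -153, -9], [0, 0, 0, 0, 0, 0, 0, 0, 0, 0, 0, 2359, -1, -145, 295], [0, 0, 0, 0, 0, 0, 0, 0, 0, 0, 0, 0, -4161, 559, 815], [0, 0, 0, 0, 0, 0, 0, 0, 0, 0, 0, 0, 0, 8879, 559], [0, 0, 0, 0, 0, 0, 0, 0, 0, 0, 0, 0, 0, 0, -17745]]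

def eL6_8 : Matrix (Fin 15) (Fin 15) ℤ := mkM 15 [[1, 0, 0, 0, 0, 0, 0, 0, 0, 0, 0, 0, 0, 0, 0], [1, 1, 0, 0, 0, 0, 0, 0, 0, 0, 0, 0, 0, 0, 0], [1, 1, 1, 0, 0, 0, 0, 0, 0, 0, 0, 0, 0, 0, 0], [1, 1, 1, 1, 0, 0, 0, 0, 0, 0, 0, 0, 0, 0, 0], [1, 1, 1, 1, 1, 0, 0, 0, 0, 0, 0, 0, 0, 0, 0], [1, 1, 1, 1, 1, 1, 0, 0, 0, 0, 0, 0, 0, 0, 0], [0, 1, 1, 1, 1, 1, 1, 0, 0, 0, 0, 0, 0, 0, 0], [0, 0, 1, 1, 1, 1, 1, 1, 0, 0, 0, 0, 0, 0, 0], [0, 0, 0, 1, 1, 1, 1, 1, 1, 0, 0, 0, 0, 0, 0], [0, 0, 0, 0, 1, 1, 1, 1, 1, 1, 0, 0, 0, 0, 0], [0, 0, 0, 0, 0, 1, 1, 1, 1, 1, 1, 0, 0, 0, 0], [0, 0, 0, 0, 0, 0, 1, 1, 1, 1, 1, 1, 0, 0, 0], [0, 0, 0, 0, 0, 0, 0,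 1, 1, 1, 1, 1, 1, 0, 0], [0, 0, 0, 0, 0, 0, 0, 0, 1, 1, 1, 1, 1, 1, 0], [0, 0, 0, 0, 0, 0, 0, 0, 0, 1, 1, 1, 1, 1, 1]]
def eU6_8 : Matrix (Fin 15) (Fin 15) ℤ := mkM 15 [[1, 1, 1, 1, 1, 1, 0, 0, 0, 0, 0, 0, 0, 0, 0], [0, 1, 1, 1, 1, 1, 1, 0, 0, 0, 0, 0, 0, 0, 0], [0, 0, 1, 1, 1, 1, 1, 1, 0, 0, 0, 0, 0, 0, 0], [0, 0, 0, 1, 1, 1, 1, 1, 1, 0, 0, 0, 0, 0, 0], [0, 0, 0, 0, 1, 1, 1, 1, 1, 1, 0, 0, 0, 0, 0], [0, 0, 0, 0, 0, 1, 1, 1, 1, 1, 1, 0, 0, 0, 0], [0, 0, 0, 0, 0, 0, 1, 1, 1, 1, 1, 1, 0, 0, 0], [0, 0, 0, 0, 0, 0, 0, 1, 1, 1, 1, 1, 1, 0, 0], [0, 0, 0, 0, 0, 0, 0, 0, 1, 1, 1, 1, 1, 1, 0], [0, 0, 0, 0, 0, 0, 0, 0, 0, 1, 1, 1, 1, 1,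 1], [0, 0, 0, 0, 0, 0, 0, 0, 0, 0, 1, 1, 1, 1, 1], [0, 0, 0, 0, 0, 0, 0, 0, 0, 0, 0, 1, 1, 1, 1], [0, 0, 0, 0, 0, 0, 0, 0, 0, 0, 0, 0, 1, 1, 1], [0, 0, 0, 0, 0, 0, 0, 0, 0, 0, 0, 0, 0, 1, 1], [0, 0, 0, 0, 0, 0, 0, 0, 0, 0, 0, 0, 0, 0, 1]]

def eL6_9 : Matrix (Fin 15) (Fin 15) ℤ := mkM 15 [[1, 0, 0, 0, 0, 0, 0, 0, 0, 0, 0, 0, 0, 0, 0], [1, 3, 0, 0, 0, 0, 0, 0, 0, 0, 0, 0, 0, 0, 0], [1, 3, 7, 0, 0, 0, 0, 0, 0, 0, 0, 0, 0, 0, 0], [1, 3, 7, 15, 0, 0, 0, 0, 0, 0, 0, 0, 0, 0, 0], [1, 3, 7, 15, 31, 0, 0, 0, 0, 0, 0, 0, 0, 0, 0], [1, 3, 7, 15, 31, 63, 0, 0, 0, 0, 0, 0, 0, 0, 0], [-62, -59, -53, -41, -17, 31, 127, 0, 0, 0, 0, 0, 0, 0, 0], [34, -62, -59, -53, -41, -17,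 31, 195, 0, 0, 0, 0, 0, 0, 0], [82, 162, -6, -11, -21, -41, -81, 3, 331, 0, 0, 0, 0, 0, 0], [42, 210, 378, 42, 21, -21, -105, -189, -21, 651, 0, 0, 0, 0, 0], [-42, 42, 378, 714, 42, 21, -21, -189, -357, -21, 1323, 0, 0, 0, 0], [-84, -170, -6, 666, 1354, 42, 85, 3, -333, -677, -21, 2667, 0, 0, 0], [-2708, -2900, -3290, -3302, -1766, 1354, 1450, 1645, 1651, 883, -677, -725, 5419, 0, 0], [3532, -2708, -2900, -3290, -3302, -1766, 1354, 1450, 1645, 1651, 883, -677, -725, 12483, 0], [6604, 13260, 364, 780, -26, -3302, -6630, -182, -390, 13, 1651, 3315, 91, 195, 26611]]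
def eU6_9 : Matrix (Fin 15) (Fin 15) ℤ := mkM 15 [[3, 1, 1, 1, 1, 1, 0, 0, 0, 0, 0, 0, 0, 0, 0], [0, 7, 1, 1, 1, 1, 3, 0, 0, 0, 0, 0, 0, 0, 0], [0, 0, 15, 1, 1, 1, 3, 7, 0, 0, 0, 0, 0, 0, 0], [0, 0, 0, 31, 1, 1, 3, 7, 15, 0, 0, 0, 0, 0, 0], [0, 0, 0, 0, 63, 1, 3, 7, 15, 31, 0, 0, 0, 0, 0], [0, 0, 0, 0, 0, 127, 3, 7, 15, 31, 63, 0, 0, 0, 0], [0, 0, 0, 0, 0, 0, 195, -53, -41, -17, 31, 127, 0, 0, 0], [0, 0, 0, 0, 0, 0, 0, 331, -53, -41, -17, 31, 195, 0, 0], [0, 0, 0, 0, 0, 0, 0, 0, 651, -21, -41, -81, 3, 331, 0], [0, 0, 0, 0, 0, 0, 0, 0, 0, 1323, -21, -105, -189, -21, 651], [0, 0, 0, 0, 0, 0, 0, 0, 0, 0, 2667, -21, -189, -357, -21], [0, 0, 0, 0, 0, 0, 0, 0, 0, 0, 0, 5419, 3, -333, -677], [0, 0, 0, 0, 0, 0,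 0, 0, 0, 0, 0, 0, 12483, 1651, 883], [0, 0, 0, 0, 0, 0, 0, 0, 0, 0, 0, 0, 0, 26611, 1651], [0, 0, 0, 0, 0, 0, 0, 0, 0, 0, 0, 0, 0, 0, 53235]]

def eL6_10 : Matrix (Fin 15) (Fin 15) ℤ := mkM 15 [[1, 0, 0, 0, 0, 0, 0, 0, 0, 0, 0, 0, 0, 0, 0], [1, 4, 0, 0, 0, 0, 0, 0, 0, 0, 0, 0, 0, 0, 0], [1, 4, 13, 0, 0, 0, 0, 0, 0, 0, 0, 0, 0, 0, 0], [1, 4, 13, 40, 0, 0, 0, 0, 0, 0, 0, 0, 0, 0, 0], [1, 4, 13, 40, 121, 0, 0, 0, 0, 0, 0, 0, 0, 0, 0], [1, 4, 13, 40, 121, 364, 0, 0, 0, 0, 0, 0, 0, 0, 0], [-363, -359, -347, -311, -203, 121, 1093, 0, 0, 0, 0, 0, 0, 0, 0], [609, -363, -359, -347, -311, -203, 121, 2920, 0, 0, 0, 0, 0, 0, 0], [933, 2796, -12, -35, -104, -311, -932, 4, 8401, 0, 0, 0, 0, 0, 0], [312, 3120, 8736, 312, 208, -104, -1040, -2912,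 -104, 25168, 0, 0, 0, 0, 0], [-624, 312, 8736, 25584, 312, 208, -104, -2912, -8528, -104, 75712, 0, 0, 0, 0], [-936, -2811, -12, 25260, 75885, 312, 937, 4, -8420, -25295, -104, 227344, 0, 0, 0], [-227655, -230571, -239331, -239367, -160635, 75885, 76857, 79777, 79789, 53545, -25295, -25619, 682969, 0, 0], [481905, -227655, -230571, -239331, -239367, -160635, 75885, 76857, 79777, 79789, 53545, -25295, -25619, 2128684, 0], [718101, 2154960, 8541, 26280, -219, -239367, -718320, -2847, -8760, 73, 79789, 239440, 949, 2920, 6465829]]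
def eU6_10 : Matrix (Fin 15) (Fin 15) ℤ := mkM 15 [[4, 1, 1, 1, 1, 1, 0, 0, 0, 0, 0, 0, 0, 0, 0], [0, 13, 1, 1, 1, 1, 4, 0, 0, 0, 0, 0, 0, 0, 0], [0, 0, 40, 1, 1, 1, 4, 13, 0, 0, 0, 0, 0, 0, 0], [0, 0, 0, 121, 1, 1, 4, 13, 40, 0, 0, 0, 0, 0, 0], [0, 0, 0, 0, 364, 1, 4, 13, 40, 121, 0, 0, 0, 0, 0], [0, 0, 0, 0, 0, 1093, 4, 13, 40, 121, 364, 0, 0, 0, 0], [0, 0, 0, 0, 0, 0, 2920, -347, -311, -203, 121, 1093, 0, 0, 0], [0, 0, 0, 0, 0, 0, 0, 8401, -347, -311, -203, 121, 2920, 0, 0], [0, 0, 0, 0, 0, 0, 0, 0, 25168, -104, -311, -932, 4, 8401, 0], [0, 0, 0, 0, 0, 0, 0, 0, 0, 75712, -104, -1040, -2912, -104, 25168], [0, 0, 0, 0, 0, 0, 0, 0, 0, 0, 227344, -104, -2912, -8528, -104], [0, 0, 0, 0, 0, 0, 0, 0, 0, 0, 0, 682969, 4, -8420, -25295], [0, 0,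 0, 0, 0, 0, 0, 0, 0, 0, 0, 0, 2128684, 79789, 53545], [0, 0, 0, 0, 0, 0, 0, 0, 0, 0, 0, 0, 0, 6465829, 79789], [0, 0, 0, 0, 0, 0, 0, 0, 0, 0, 0, 0, 0, 0, 19397560]]

def eL6_11 : Matrix (Fin 15) (Fin 15) ℤ := mkM 15 [[1, 0, 0, 0, 0, 0, 0, 0, 0, 0, 0, 0, 0, 0, 0], [1, 5, 0, 0, 0, 0, 0, 0, 0, 0, 0, 0, 0, 0, 0], [1, 5, 21, 0, 0, 0, 0, 0, 0, 0, 0, 0, 0, 0, 0], [1, 5, 21, 85, 0, 0, 0, 0, 0, 0, 0, 0, 0, 0, 0], [1, 5, 21, 85, 341, 0, 0, 0, 0, 0, 0, 0, 0, 0, 0], [1, 5, 21, 85, 341, 1365, 0, 0, 0, 0, 0, 0, 0, 0, 0], [-1364, -1359, -1339, -1259, -939, 341, 5461, 0, 0, 0, 0, 0, 0, 0, 0], [3756, -1364, -1359, -1339, -1259, -939, 341, 20485, 0, 0, 0, 0, 0, 0, 0], [5036, 20140, -20, -79, -315, -1259, -5035, 5, 80581, 0, 0, 0, 0, 0, 0],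 [1260, 21420, 81900, 1260, 945, -315, -5355, -20475, -315, 322245, 0, 0, 0, 0, 0], [-3780, 1260, 81900, 323820, 1260, 945, -315, -20475, -80955, -315, 1289925, 0, 0, 0, 0], [-5040, -20164, -20, 322540, 1290476, 1260, 5041, 5, -80635, -322619, -315, 5160645, 0, 0, 0], [-5161904, -5182384, -5264324, -5264404, -3953684, 1290476, 1295596, 1316081, 1316101, 988421, -322619, -323899, 20647621, 0, 0], [15814736, -5161904, -5182384, -5264324, -5264404, -3953684, 1290476, 1295596, 1316081, 1316101, 988421, -322619, -323899, 83906565, 0], [21057616, 84234320, 80976, 327760, -964, -5264404, -21058580, -20244, -81940, 241, 1316101, 5264645, 5061, 20485, 336942341]]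
def eU6_11 : Matrix (Fin 15) (Fin 15) ℤ := mkM 15 [[5, 1, 1, 1, 1, 1, 0, 0, 0, 0, 0, 0, 0, 0, 0], [0, 21, 1, 1, 1, 1, 5, 0, 0, 0, 0, 0, 0, 0, 0], [0, 0, 85, 1, 1, 1, 5, 21, 0, 0, 0, 0, 0, 0, 0], [0, 0, 0, 341, 1, 1, 5, 21, 85, 0, 0, 0, 0, 0, 0], [0, 0, 0, 0, 1365, 1, 5, 21, 85, 341, 0, 0, 0, 0, 0], [0, 0, 0, 0, 0, 5461, 5, 21, 85, 341, 1365, 0, 0, 0, 0], [0, 0, 0, 0, 0, 0, 20485, -1339, -1259, -939, 341, 5461, 0, 0, 0], [0, 0, 0, 0, 0, 0, 0, 80581, -1339, -1259, -939, 341, 20485, 0, 0], [0, 0, 0, 0, 0, 0, 0, 0, 322245, -315, -1259, -5035, 5, 80581, 0], [0, 0, 0, 0, 0, 0, 0, 0, 0, 1289925, -315, -5355, -20475, -315, 322245], [0, 0, 0, 0, 0, 0, 0, 0, 0, 0, 5160645, -315, -20475, -80955, -315], [0, 0, 0, 0, 0, 0, 0, 0, 0, 0, 0, 20647621, 5, -80635,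 -322619], [0, 0, 0, 0, 0, 0, 0, 0, 0, 0, 0, 0, 83906565, 1316101, 988421], [0, 0, 0, 0, 0, 0, 0, 0, 0, 0, 0, 0, 0, 336942341, 1316101], [0, 0, 0, 0, 0, 0, 0, 0, 0, 0, 0, 0, 0, 0, 1347769605]]

def eL6_12 : Matrix (Fin 15) (Fin 15) ℤ := mkM 15 [[1, 0, 0, 0, 0, 0, 0, 0, 0, 0, 0, 0, 0, 0, 0], [1, 6, 0, 0, 0, 0, 0, 0, 0, 0, 0, 0, 0, 0, 0], [1, 6, 31, 0, 0, 0, 0, 0, 0, 0, 0, 0, 0, 0, 0], [1, 6, 31, 156, 0, 0, 0, 0, 0, 0, 0, 0, 0, 0, 0], [1, 6, 31, 156, 781, 0, 0, 0, 0, 0, 0, 0, 0, 0, 0], [1, 6, 31, 156, 781, 3906, 0, 0, 0, 0, 0, 0, 0, 0, 0], [-3905, -3899, -3869, -3719, -2969, 781, 19531, 0, 0, 0, 0, 0, 0, 0, 0], [14845, -3905, -3899, -3869, -3719, -2969, 781, 93756, 0, 0, 0, 0, 0, 0, 0], [18595, 92970, -30, -149, -744, -3719, -18594, 6, 464881, 0,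 0, 0, 0, 0, 0], [3720, 96720, 468720, 3720, 2976, -744, -19344, -93744, -744, 2324256, 0, 0, 0, 0, 0], [-14880, 3720, 468720, 2328720, 3720, 2976, -744, -93744, -465744, -744, 11624256, 0, 0, 0, 0], [-18600, -93005, -30, 2324970, 11625595, 3720, 18601, 6, -464994, -2325119, -744, 58124256, 0, 0, 0], [-58127975, -58221725, -58690505, -58690655, -46971905, 11625595, 11644345, 11738101, 11738131, 9394381, -2325119, -2328869, 290639881, 0, 0], [234859525, -58127975, -58221725, -58690505, -58690655, -46971905, 11625595, 11644345, 11738101, 11738131, 9394381, -2325119, -2328869, 1464937506, 0], [293453275, 1467281400, 465775, 2343900, -3005, -58690655, -293456280, -93155, -468780, 601, 11738131, 58691256, 18631, 93756, 7336425631]]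
def eU6_12 : Matrix (Fin 15) (Fin 15) ℤ := mkM 15 [[6, 1, 1, 1, 1, 1, 0, 0, 0, 0, 0, 0, 0, 0, 0], [0, 31, 1, 1, 1, 1, 6, 0, 0, 0, 0, 0, 0, 0, 0], [0, 0, 156, 1, 1, 1, 6, 31, 0, 0, 0, 0, 0, 0, 0], [0, 0, 0, 781, 1, 1, 6, 31, 156, 0, 0, 0, 0, 0, 0], [0, 0, 0, 0, 3906, 1, 6, 31, 156, 781, 0, 0, 0, 0, 0], [0, 0, 0, 0, 0, 19531, 6, 31, 156, 781, 3906, 0, 0, 0, 0], [0, 0, 0, 0, 0, 0, 93756, -3869, -3719, -2969, 781, 19531, 0, 0, 0], [0, 0, 0, 0, 0, 0, 0, 464881, -3869, -3719, -2969, 781, 93756, 0, 0], [0, 0, 0, 0, 0, 0, 0, 0, 2324256, -744, -3719, -18594, 6, 464881, 0], [0, 0, 0, 0, 0, 0, 0, 0, 0, 11624256, -744, -19344, -93744, -744, 2324256], [0, 0, 0, 0, 0, 0, 0, 0, 0, 0, 58124256, -744, -93744, -465744, -744], [0, 0, 0, 0, 0, 0, 0, 0, 0, 0, 0, 290639881,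 6, -464994, -2325119], [0, 0, 0, 0, 0, 0, 0, 0, 0, 0, 0, 0, 1464937506, 11738131, 9394381], [0, 0, 0, 0, 0, 0, 0, 0, 0, 0, 0, 0, 0, 7336425631, 11738131], [0, 0, 0, 0, 0, 0, 0, 0, 0, 0, 0, 0, 0, 0, 36682128756]]

def eL6_13 : Matrix (Fin 15) (Fin 15) ℤ := mkM 15 [[1, 0, 0, 0, 0, 0, 0, 0, 0, 0, 0, 0, 0, 0, 0], [1, 7, 0, 0, 0, 0, 0, 0, 0, 0, 0, 0, 0, 0, 0], [1, 7, 43, 0, 0, 0, 0, 0, 0, 0, 0, 0, 0, 0, 0], [1, 7, 43, 259, 0, 0, 0, 0, 0, 0, 0, 0, 0, 0, 0], [1, 7, 43, 259, 1555, 0, 0, 0, 0, 0, 0, 0, 0, 0, 0], [1, 7, 43, 259, 1555, 9331, 0, 0, 0, 0, 0, 0, 0, 0, 0], [-9330, -9323, -9281, -9029, -7517, 1555, 55987, 0, 0, 0, 0, 0, 0, 0, 0], [45102, -9330, -9323, -9281, -9029, -7517, 1555, 326599, 0, 0, 0, 0, 0, 0, 0], [54174, 325038, -42, -251, -1505, -9029,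 -54173, 7, 1950271, 0, 0, 0, 0, 0, 0], [9030, 334110, 1959510, 9030, 7525, -1505, -55685, -326585, -1505, 11701375, 0, 0, 0, 0, 0], [-45150, 9030, 1959510, 11711910, 9030, 7525, -1505, -326585, -1951985, -1505, 70215775, 0, 0, 0, 0], [-54180, -325086, -42, 11702838, 70218534, 9030, 54181, 7, -1950473, -11703089, -1505, 421302175, 0, 0, 0], [-421311204, -421637796, -423597390, -423597642, -353053770, 70218534, 70272966, 70599565, 70599607, 58842295, -11703089, -11712161, 2527867231, 0, 0], [2118322620, -421311204, -421637796, -423597390, -423597642, -353053770, 70218534, 70272966, 70599565, 70599607, 58842295, -11703089, -11712161, 15237802951, 0], [2541585852, 15249560508, 1952028, 11757564, -7566, -423597642, -2541593418, -325338, -1959594, 1261, 70599607, 423598903, 54223, 326599, 91497417271]]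
def eU6_13 : Matrix (Fin 15) (Fin 15) ℤ := mkM 15 [[7, 1, 1, 1, 1, 1, 0, 0, 0, 0, 0, 0, 0, 0, 0], [0, 43, 1, 1, 1, 1, 7, 0, 0, 0, 0, 0, 0, 0, 0], [0, 0, 259, 1, 1, 1, 7, 43, 0, 0, 0, 0, 0, 0, 0], [0, 0, 0, 1555, 1, 1, 7, 43, 259, 0, 0, 0, 0, 0, 0], [0, 0, 0, 0, 9331, 1, 7, 43, 259, 1555, 0, 0, 0, 0, 0], [0, 0, 0, 0, 0, 55987, 7, 43, 259, 1555, 9331, 0, 0, 0, 0], [0, 0, 0, 0, 0, 0, 326599, -9281, -9029, -7517, 1555, 55987, 0, 0, 0], [0, 0, 0, 0, 0, 0, 0, 1950271, -9281, -9029, -7517, 1555, 326599, 0, 0], [0, 0, 0, 0, 0, 0, 0, 0, 11701375, -1505, -9029, -54173, 7, 1950271, 0], [0, 0, 0, 0, 0, 0, 0, 0, 0, 70215775, -1505, -55685, -326585, -1505, 11701375], [0, 0, 0, 0, 0, 0, 0, 0, 0, 0, 421302175, -1505, -326585, -1951985, -1505], [0, 0, 0, 0, 0, 0, 0, 0, 0,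 0, 0, 2527867231, 7, -1950473, -11703089], [0, 0, 0, 0, 0, 0, 0, 0, 0, 0, 0, 0, 15237802951, 70599607, 58842295], [0, 0, 0, 0, 0, 0, 0, 0, 0, 0, 0, 0, 0, 91497417271, 70599607], [0, 0, 0, 0, 0, 0, 0, 0, 0, 0, 0, 0, 0, 0, 548984504887]]

def eL6_14 : Matrix (Fin 15) (Fin 15) ℤ := mkM 15 [[1, 0, 0, 0, 0, 0, 0, 0, 0, 0, 0, 0, 0, 0, 0], [1, 8, 0, 0, 0, 0, 0, 0, 0, 0, 0, 0, 0, 0, 0], [1, 8, 57, 0, 0, 0, 0, 0, 0, 0, 0, 0, 0, 0, 0], [1, 8, 57, 400, 0, 0, 0, 0, 0, 0, 0, 0, 0, 0, 0], [1, 8, 57, 400, 2801, 0, 0, 0, 0, 0, 0, 0, 0, 0, 0], [1, 8, 57, 400, 2801, 19608, 0, 0, 0, 0, 0, 0, 0, 0, 0], [-19607, -19599, -19543, -19151, -16407, 2801, 137257, 0, 0, 0, 0, 0, 0, 0, 0], [114849, -19607, -19599, -19543, -19151, -16407, 2801, 941200, 0, 0, 0, 0, 0, 0, 0], [134057, 938392,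 -56, -391, -2736, -19151, -134056, 8, 6568801, 0, 0, 0, 0, 0, 0], [19152, 957600, 6588288, 19152, 16416, -2736, -136800, -941184, -2736, 45981216, 0, 0, 0, 0, 0], [-114912, 19152, 6588288, 46003104, 19152, 16416, -2736, -941184, -6571872, -2736, 321884928, 0, 0, 0, 0], [-134064, -938455, -56, 45983896, 321890009, 19152, 134065, 8, -6569128, -45984287, -2736, 2253210912, 0, 0, 0], [-2253230063, -2254171255, -2260759655, -2260760047, -1937931191, 321890009, 322024465, 322965665, 322965721, 276847313, -45984287, -46003495, 15772610449, 0, 0], [13565518337, -2253230063, -2254171255, -2260759655, -2260760047, -1937931191, 321890009, 322024465, 322965665, 322965721, 276847313, -45984287, -46003495, 110731238808, 0], [15825320329, 110777357600, 6571929, 46118800, -16471, -2260760047, -15825336800, -938847, -6588400, 2353, 322965721, 2260762400, 134121, 941200, 775441637321]]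
def eU6_14 : Matrix (Fin 15) (Fin 15) ℤ := mkM 15 [[8, 1, 1, 1, 1, 1, 0, 0, 0, 0, 0, 0, 0, 0, 0], [0, 57, 1, 1, 1, 1, 8, 0, 0, 0, 0, 0, 0, 0, 0], [0, 0, 400, 1, 1, 1, 8, 57, 0, 0, 0, 0, 0, 0, 0], [0, 0, 0, 2801, 1, 1, 8, 57, 400, 0, 0, 0, 0, 0, 0], [0, 0, 0, 0, 19608, 1, 8, 57, 400, 2801, 0, 0, 0, 0, 0], [0, 0, 0, 0, 0, 137257, 8, 57, 400, 2801, 19608, 0, 0, 0, 0], [0, 0, 0, 0, 0, 0, 941200, -19543, -19151, -16407, 2801, 137257, 0, 0, 0], [0, 0, 0, 0, 0, 0, 0, 6568801, -19543, -19151, -16407, 2801, 941200, 0, 0], [0, 0, 0, 0, 0, 0, 0, 0, 45981216, -2736, -19151, -134056, 8, 6568801, 0], [0, 0, 0, 0, 0, 0, 0, 0, 0, 321884928, -2736, -136800, -941184, -2736, 45981216], [0, 0, 0, 0, 0, 0, 0, 0, 0, 0, 2253210912, -2736, -941184, -6571872, -2736], [0, 0, 0, 0, 0, 0, 0, 0,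 0, 0, 0, 15772610449, 8, -6569128, -45984287], [0, 0, 0, 0, 0, 0, 0, 0, 0, 0, 0, 0, 110731238808, 322965721, 276847313], [0, 0, 0, 0, 0, 0, 0, 0, 0, 0, 0, 0, 0, 775441637321, 322965721], [0, 0, 0, 0, 0, 0, 0, 0, 0, 0, 0, 0, 0, 0, 5428091463600]]

theorem charpolyZ6 : (Fz6).charpoly = (X+1)*(X^8+X^4+1)*(X^6+1) := by
  have E0 : (Fz6).charpoly.eval (-9) = (-183042582592688) := by
    rw [charpoly_eval]
    exact det_eq_of_LU _ eL6_0 eU6_0 (-3235192413657167037093024174920137901617656003254545934115853101502165339659813216940615270400000000) (-183042582592688)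
      (by decide) (@of_decide_eq_true _ (@Nat.decidableForallFin _ _ fun _ => @Nat.decidableForallFin _ _ fun _ => @instDecidableForall _ _ _ (Int.instDecidableEq _ _)) rfl) (@of_decide_eq_true _ (@Nat.decidableForallFin _ _ fun _ => @Nat.decidableForallFin _ _ fun _ => @instDecidableForall _ _ _ (Int.instDecidableEq _ _)) rfl) (by decide) (by decide) (by decide)
  have E1 : (Fz6).charpoly.eval (-8) = (-30793961074695) := by
    rw [charpoly_eval]
    exact det_eq_of_LU _ eL6_1 eU6_1 (-11269075173859609795804099835122691589625830788674319300952554058706157474474867346496917540975) (-30793961074695)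
      (by decide) (@of_decide_eq_true _ (@Nat.decidableForallFin _ _ fun _ => @Nat.decidableForallFin _ _ fun _ => @instDecidableForall _ _ _ (Int.instDecidableEq _ _)) rfl) (@of_decide_eq_true _ (@Nat.decidableForallFin _ _ fun _ => @Nat.decidableForallFin _ _ fun _ => @instDecidableForall _ _ _ (Int.instDecidableEq _ _)) rfl) (by decide) (by decide) (by decide)
  have E2 : (Fz6).charpoly.eval (-7) = (-4071068597700) := by
    rw [charpoly_eval]
    exact det_eq_of_LU _ eL6_2 eU6_2 (-7087441238339325604239094208394608581758822696303947058449451748990573299326747934720000) (-4071068597700)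
      (by decide) (@of_decide_eq_true _ (@Nat.decidableForallFin _ _ fun _ => @Nat.decidableForallFin _ _ fun _ => @instDecidableForall _ _ _ (Int.instDecidableEq _ _)) rfl) (@of_decide_eq_true _ (@Nat.decidableForallFin _ _ fun _ => @Nat.decidableForallFin _ _ fun _ => @instDecidableForall _ _ _ (Int.instDecidableEq _ _)) rfl) (by decide) (by decide) (by decide)
  have E3 : (Fz6).charpoly.eval (-6) = (-392131789205) := by
    rw [charpoly_eval]
    exact det_eq_of_LU _ eL6_3 eU6_3 (-468545911714505036537631329488945277711620748232478257754406090009647309701171875) (-392131789205)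
      (by decide) (@of_decide_eq_true _ (@Nat.decidableForallFin _ _ fun _ => @Nat.decidableForallFin _ _ fun _ => @instDecidableForall _ _ _ (Int.instDecidableEq _ _)) rfl) (@of_decide_eq_true _ (@Nat.decidableForallFin _ _ fun _ => @Nat.decidableForallFin _ _ fun _ => @instDecidableForall _ _ _ (Int.instDecidableEq _ _)) rfl) (by decide) (by decide) (by decide)
  have E4 : (Fz6).charpoly.eval (-5) = (-24454752504) := by
    rw [charpoly_eval]
    exact det_eq_of_LU _ eL6_4 eU6_4 (-1396478553909774500500885618997285492692010727601688734573709466789740544) (-24454752504)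
      (by decide) (@of_decide_eq_true _ (@Nat.decidableForallFin _ _ fun _ => @Nat.decidableForallFin _ _ fun _ => @instDecidableForall _ _ _ (Int.instDecidableEq _ _)) rfl) (@of_decide_eq_true _ (@Nat.decidableForallFin _ _ fun _ => @Nat.decidableForallFin _ _ fun _ => @instDecidableForall _ _ _ (Int.instDecidableEq _ _)) rfl) (by decide) (by decide) (by decide)
  have E5 : (Fz6).charpoly.eval (-4) = (-808661763) := by
    rw [charpoly_eval]
    exact det_eq_of_LU _ eL6_5 eU6_5 (-44603663338366135888524137167147760776149104495642386308984375) (-808661763)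
      (by decide) (@of_decide_eq_true _ (@Nat.decidableForallFin _ _ fun _ => @Nat.decidableForallFin _ _ fun _ => @instDecidableForall _ _ _ (Int.instDecidableEq _ _)) rfl) (@of_decide_eq_true _ (@Nat.decidableForallFin _ _ fun _ => @Nat.decidableForallFin _ _ fun _ => @instDecidableForall _ _ _ (Int.instDecidableEq _ _)) rfl) (by decide) (by decide) (by decide)
  have E6 : (Fz6).charpoly.eval (-3) = (-9698780) := by
    rw [charpoly_eval]
    exact det_eq_of_LU _ eL6_6 eU6_6 (-978870577085914775605382280306428102178347417600) (-9698780)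
      (by decide) (@of_decide_eq_true _ (@Nat.decidableForallFin _ _ fun _ => @Nat.decidableForallFin _ _ fun _ => @instDecidableForall _ _ _ (Int.instDecidableEq _ _)) rfl) (@of_decide_eq_true _ (@Nat.decidableForallFin _ _ fun _ => @Nat.decidableForallFin _ _ fun _ => @instDecidableForall _ _ _ (Int.instDecidableEq _ _)) rfl) (by decide) (by decide) (by decide)
  have E7 : (Fz6).charpoly.eval (-2) = (-17745) := by
    rw [charpoly_eval]
    exact det_eq_of_LU _ eL6_7 eU6_7 (-24918588544283088128779380075) (-17745)
      (by decide) (@of_decide_eq_true _ (@Nat.decidableForallFin _ _ fun _ => @Nat.decidableForallFin _ _ fun _ => @instDecidableForall _ _ _ (Int.instDecidableEq _ _)) rfl) (@of_decide_eq_true _ (@Nat.decidableForallFin _ _ fun _ => @Nat.decidableForallFin _ _ fun _ => @instDecidableForall _ _ _ (Int.instDecidableEq _ _)) rfl) (by decide) (by decide) (by decide)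
  have E8 : (Fz6).charpoly.eval 0 = 1 := by
    rw [charpoly_eval]
    exact det_eq_of_LU _ eL6_8 eU6_8 1 1
      (by decide) (@of_decide_eq_true _ (@Nat.decidableForallFin _ _ fun _ => @Nat.decidableForallFin _ _ fun _ => @instDecidableForall _ _ _ (Int.instDecidableEq _ _)) rfl) (@of_decide_eq_true _ (@Nat.decidableForallFin _ _ fun _ => @Nat.decidableForallFin _ _ fun _ => @instDecidableForall _ _ _ (Int.instDecidableEq _ _)) rfl) (by decide) (by decide) (by decide)
  have E9 : (Fz6).charpoly.eval 2 = 53235 := by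
    rw [charpoly_eval]
    exact det_eq_of_LU _ eL6_9 eU6_9 20851739377440934944009851729995725 53235
      (by decide) (@of_decide_eq_true _ (@Nat.decidableForallFin _ _ fun _ => @Nat.decidableForallFin _ _ fun _ => @instDecidableForall _ _ _ (Int.instDecidableEq _ _)) rfl) (@of_decide_eq_true _ (@Nat.decidableForallFin _ _ fun _ => @Nat.decidableForallFin _ _ fun _ => @instDecidableForall _ _ _ (Int.instDecidableEq _ _)) rfl) (by decide) (by decide) (by decide)
  have E10 : (Fz6).charpoly.eval 3 = 19397560 := by
    rw [charpoly_eval]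
    exact det_eq_of_LU _ eL6_10 eU6_10 10002703828921952510142321038704190051197044077363200 19397560
      (by decide) (@of_decide_eq_true _ (@Nat.decidableForallFin _ _ fun _ => @Nat.decidableForallFin _ _ fun _ => @instDecidableForall _ _ _ (Int.instDecidableEq _ _)) rfl) (@of_decide_eq_true _ (@Nat.decidableForallFin _ _ fun _ => @Nat.decidableForallFin _ _ fun _ => @instDecidableForall _ _ _ (Int.instDecidableEq _ _)) rfl) (by decide) (by decide) (by decide)
  have E11 : (Fz6).charpoly.eval 4 = 1347769605 := by
    rw [charpoly_eval]
    exact det_eq_of_LU _ eL6_11 eU6_11 46893455457294388301305175991664070415439663744342949874134765625 1347769605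
      (by decide) (@of_decide_eq_true _ (@Nat.decidableForallFin _ _ fun _ => @Nat.decidableForallFin _ _ fun _ => @instDecidableForall _ _ _ (Int.instDecidableEq _ _)) rfl) (@of_decide_eq_true _ (@Nat.decidableForallFin _ _ fun _ => @Nat.decidableForallFin _ _ fun _ => @instDecidableForall _ _ _ (Int.instDecidableEq _ _)) rfl) (by decide) (by decide) (by decide)
  have E12 : (Fz6).charpoly.eval 5 = 36682128756 := by
    rw [charpoly_eval]
    exact det_eq_of_LU _ eL6_12 eU6_12 369616644928200416202196456090478331438688199039734438261549098290009604096 36682128756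
      (by decide) (@of_decide_eq_true _ (@Nat.decidableForallFin _ _ fun _ => @Nat.decidableForallFin _ _ fun _ => @instDecidableForall _ _ _ (Int.instDecidableEq _ _)) rfl) (@of_decide_eq_true _ (@Nat.decidableForallFin _ _ fun _ => @Nat.decidableForallFin _ _ fun _ => @instDecidableForall _ _ _ (Int.instDecidableEq _ _)) rfl) (by decide) (by decide) (by decide)
  have E13 : (Fz6).charpoly.eval 6 = 548984504887 := by
    rw [charpoly_eval]
    exact det_eq_of_LU _ eL6_13 eU6_13 49212178898338952011609813666543304744071758597942824163615870545460200896964453125 548984504887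
      (by decide) (@of_decide_eq_true _ (@Nat.decidableForallFin _ _ fun _ => @Nat.decidableForallFin _ _ fun _ => @instDecidableForall _ _ _ (Int.instDecidableEq _ _)) rfl) (@of_decide_eq_true _ (@Nat.decidableForallFin _ _ fun _ => @Nat.decidableForallFin _ _ fun _ => @instDecidableForall _ _ _ (Int.instDecidableEq _ _)) rfl) (by decide) (by decide) (by decide)
  have E14 : (Fz6).charpoly.eval 7 = 5428091463600 := by
    rw [charpoly_eval]
    exact det_eq_of_LU _ eL6_14 eU6_14 383954321036438605657916862994880169276660789857458913288465820244239322891219328040960000 5428091463600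
      (by decide) (@of_decide_eq_true _ (@Nat.decidableForallFin _ _ fun _ => @Nat.decidableForallFin _ _ fun _ => @instDecidableForall _ _ _ (Int.instDecidableEq _ _)) rfl) (@of_decide_eq_true _ (@Nat.decidableForallFin _ _ fun _ => @Nat.decidableForallFin _ _ fun _ => @instDecidableForall _ _ _ (Int.instDecidableEq _ _)) rfl) (by decide) (by decide) (by decide)
  apply poly_eq_of_eval _ _ (Matrix.charpoly_monic _) (by monicity!)
    (by simp) (by compute_degree!) ({(-9), (-8), (-7), (-6), (-5), (-4), (-3), (-2), 0, 2, 3, 4, 5, 6, 7} : Finset ℤ) (by decide)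
  intro a ha
  fin_cases ha <;>
    simp only [E0, E1, E2, E3, E4, E5, E6, E7, E8, E9, E10, E11, E12, E13, E14] <;>
    norm_num [Polynomial.eval_mul, Polynomial.eval_add, Polynomial.eval_pow,
      Polynomial.eval_X, Polynomial.eval_one]

theorem part6 : coxeterPolyN 15 6 = (X + 1) * (X ^ 8 + X ^ 4 + 1) * (X ^ 6 + 1) := by
  have h := coxeter_eq 15 6 Bz6 Fz6 (by decide) (by decide)
  unfold coxeterPolyN
  rw [h, Matrix.charpoly_map, charpolyZ6]
  simp [Polynomial.map_mul, Polynomial.map_add, Polynomial.map_pow, Polynomial.map_one]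

/-- The Coxeter polynomials of N₁₅(4) and N₁₅(6) coincide and equal
(λ+1)(λ⁸+λ⁴+1)(λ⁶+1). -/
theorem coxeterPoly_15_4_and_15_6 :
    coxeterPolyN 15 4 = (X + 1) * (X ^ 8 + X ^ 4 + 1) * (X ^ 6 + 1) ∧
    coxeterPolyN 15 6 = (X + 1) * (X ^ 8 + X ^ 4 + 1) * (X ^ 6 + 1) := by
  exact ⟨part4, part6⟩
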